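/- arXiv:1510.04528 — 11 statements merged into one kernel-verified Lean document; each statement's English description precedes it below -/
import Mathlib

section
/- Let X and Y be real Hilbert spaces, let A : X → X be a bounded skew-adjoint linear operator (A* = −A), and let C : X → Y be a bounded linear operator such that the system is exactly observable at time T > 0 with constant δ > 0. Then there exist M ≥ 0 and κ₀ > 0 such that for every κ ∈ (0, κ₀), the composition of semigroup operators satisfies ‖e^{(−A − κC*C)T} ∘ e^{(A − κC*C)T}‖ ≤ 1 − 2δκ + Mκ². -/
open MeasureTheory NormedSpace ContinuousLinearMap Set
open scoped RealInnerProductSpace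

set_option linter.unusedSectionVars false
set_option synthInstance.maxHeartbeats 1000000
set_option maxHeartbeats 2000000

section Helpers

variable {X Y : Type*} [NormedAddCommGroup X] [InnerProductSpace ℝ X] [CompleteSpace X]
  [NormedAddCommGroup Y] [InnerProductSpace ℝ Y] [CompleteSpace Y]

lemma my_norm_exp_le (B : X →L[ℝ] X) : ‖exp B‖ ≤ Real.exp ‖B‖ := by
  rw [exp_eq_tsum ℝ]
  calc ‖∑' n : ℕ, (n.factorial : ℝ)⁻¹ • B ^ n‖
      ≤ ∑' n : ℕ, ‖(n.factorial : ℝ)⁻¹ • B ^ n‖ :=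
        norm_tsum_le_tsum_norm (norm_expSeries_summable' B)
    _ ≤ ∑' n : ℕ, ‖B‖ ^ n / n.factorial := by
        refine Summable.tsum_le_tsum (fun n => ?_) (norm_expSeries_summable' B)
          (Real.summable_pow_div_factorial ‖B‖)
        rw [norm_smul ((n.factorial:ℝ)⁻¹) (B^n), norm_inv, Real.norm_natCast, div_eq_inv_mul]
        refine mul_le_mul_of_nonneg_left ?_ (by positivity)
        cases n with
        | zero => simp only [pow_zero]; exact ContinuousLinearMap.norm_id_le
        | succ m => exact norm_pow_le' B m.succ_pos
    _ = Real.exp ‖B‖ := by rw [Real.exp_eq_exp_ℝ, exp_eq_tsum_div]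

lemma exp_comm_self (E : X →L[ℝ] X) (u : ℝ) :
    exp (u • E) * E = E * exp (u • E) :=
  (hasDerivAt_exp_smul_const (𝕂 := ℝ) E u).unique (hasDerivAt_exp_smul_const' (𝕂 := ℝ) E u)

lemma my_exp_diff (D E : X →L[ℝ] X) {t : ℝ} (ht : 0 ≤ t) :
    ‖exp (t • D) - exp (t • E)‖ ≤ t * (Real.exp (t * ‖E‖) * (‖D - E‖ * Real.exp (t * ‖D‖))) := by
  set g : ℝ → (X →L[ℝ] X) := fun s => exp ((t - s) • E) * exp (s • D) with hg
  have hderiv : ∀ s : ℝ, HasDerivAt g (exp ((t - s) • E) * ((D - E) * exp (s • D))) s := by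
    intro s
    have hc : HasDerivAt (fun s : ℝ => t - s) (-1) s := (hasDerivAt_id s).const_sub t
    have h1 : HasDerivAt (fun s : ℝ => exp ((t - s) • E)) (-(E * exp ((t - s) • E))) s := by
      have := (hasDerivAt_exp_smul_const' (𝕂 := ℝ) E (t - s)).scomp s hc
      simpa [Function.comp_def] using this
    have h2 : HasDerivAt (fun s : ℝ => exp (s • D)) (exp (s • D) * D) s :=
      hasDerivAt_exp_smul_const (𝕂 := ℝ) D s
    have := h1.mul h2
    refine this.congr_deriv ?_
    rw [← exp_comm_self E (t - s), exp_comm_self D s]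
    noncomm_ring
  have hcont : Continuous fun s => exp ((t - s) • E) * ((D - E) * exp (s • D)) := by
    have hE : Continuous fun s : ℝ => exp ((t - s) • E) :=
      (continuous_iff_continuousAt.2 fun y => (exp_analytic (𝕂 := ℝ) y).continuousAt).comp (((continuous_const.sub continuous_id).smul continuous_const))
    have hD : Continuous fun s : ℝ => exp (s • D) :=
      (continuous_iff_continuousAt.2 fun y => (exp_analytic (𝕂 := ℝ) y).continuousAt).comp ((continuous_id.smul continuous_const))
    exact hE.mul (continuous_const.mul hD)
  have hftc : exp (t • D) - exp (t • E)
      = ∫ s in (0:ℝ)..t, exp ((t - s) • E) * ((D - E) * exp (s • D)) := by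
    have := intervalIntegral.integral_eq_sub_of_hasDerivAt
      (f := g) (f' := fun s => exp ((t - s) • E) * ((D - E) * exp (s • D)))
      (a := (0:ℝ)) (b := t) (fun s _ => hderiv s) (hcont.intervalIntegrable 0 t)
    rw [this, hg]
    simp [exp_zero]
  rw [hftc]
  have hb : ∀ s ∈ Set.Icc (0:ℝ) t,
      ‖exp ((t - s) • E) * ((D - E) * exp (s • D))‖
        ≤ Real.exp (t * ‖E‖) * (‖D - E‖ * Real.exp (t * ‖D‖)) := by
    intro s hs
    refine (norm_mul_le _ _).trans ?_
    have h1 : ‖exp ((t - s) • E)‖ ≤ Real.exp (t * ‖E‖) := by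
      refine (my_norm_exp_le _).trans (Real.exp_le_exp.2 ?_)
      rw [norm_smul (t - s) E, Real.norm_eq_abs, abs_of_nonneg (by linarith [hs.2])]
      exact mul_le_mul_of_nonneg_right (by linarith [hs.1]) (norm_nonneg E)
    have h2 : ‖(D - E) * exp (s • D)‖ ≤ ‖D - E‖ * Real.exp (t * ‖D‖) := by
      refine (norm_mul_le _ _).trans (mul_le_mul_of_nonneg_left ?_ (norm_nonneg _))
      refine (my_norm_exp_le _).trans (Real.exp_le_exp.2 ?_)
      rw [norm_smul s D, Real.norm_eq_abs, abs_of_nonneg hs.1]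
      exact mul_le_mul_of_nonneg_right hs.2 (norm_nonneg D)
    exact mul_le_mul h1 h2 (norm_nonneg _) (Real.exp_nonneg _)
  have hint := intervalIntegral.norm_integral_le_of_norm_le_const
    (C := Real.exp (t * ‖E‖) * (‖D - E‖ * Real.exp (t * ‖D‖))) (a := (0:ℝ)) (b := t)
    (f := fun s => exp ((t - s) • E) * ((D - E) * exp (s • D)))
    (fun s hs => by rw [uIoc_of_le ht] at hs; exact hb s ⟨hs.1.le, hs.2⟩)
  refine hint.trans (le_of_eq ?_)
  rw [sub_zero, abs_of_nonneg ht]; ring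

lemma exp_apply_hasDerivAt (B : X →L[ℝ] X) (x : X) (s : ℝ) :
    HasDerivAt (fun s : ℝ => exp (s • B) x) (B (exp (s • B) x)) s := by
  have h := (hasDerivAt_exp_smul_const' (𝕂 := ℝ) B s).clm_apply (hasDerivAt_const s x)
  simpa [ContinuousLinearMap.mul_apply] using h

lemma exp_apply_continuous (B : X →L[ℝ] X) (x : X) :
    Continuous (fun s : ℝ => exp (s • B) x) :=
  ((continuous_iff_continuousAt.2 fun y => (exp_analytic (𝕂 := ℝ) y).continuousAt).comp (continuous_id.smul continuous_const)).clm_apply continuous_const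

lemma energy_identity (B : X →L[ℝ] X) (x : X) (t : ℝ) :
    ‖exp (t • B) x‖ ^ 2 = ‖x‖ ^ 2
      + ∫ s in (0:ℝ)..t, 2 * ⟪B (exp (s • B) x), exp (s • B) x⟫ := by
  set u : ℝ → X := fun s => exp (s • B) x with hu
  have hderiv : ∀ s : ℝ, HasDerivAt (fun s => ⟪u s, u s⟫)
      (2 * ⟪B (u s), u s⟫) s := by
    intro s
    have h := (exp_apply_hasDerivAt B x s).inner ℝ (exp_apply_hasDerivAt B x s)
    refine h.congr_deriv ?_
    rw [real_inner_comm]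
    ring
  have hcont : Continuous fun s => 2 * ⟪B (u s), u s⟫ :=
    continuous_const.mul (((B.continuous.comp (exp_apply_continuous B x))).inner
      (exp_apply_continuous B x))
  have hftc := intervalIntegral.integral_eq_sub_of_hasDerivAt
    (f := fun s => ⟪u s, u s⟫) (fun s _ => hderiv s) (hcont.intervalIntegrable 0 t)
  have h0 : u 0 = x := by simp [hu, exp_zero]
  rw [← real_inner_self_eq_norm_sq, ← real_inner_self_eq_norm_sq, hftc]
  simp only [h0]
  ring

lemma skew_inner_zero {G : X →L[ℝ] X} (hG : ContinuousLinearMap.adjoint G = -G) (y : X) :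
    ⟪G y, y⟫ = 0 := by
  have h : ⟪y, G y⟫ = ⟪ContinuousLinearMap.adjoint G y, y⟫ :=
    (ContinuousLinearMap.adjoint_inner_left G y y).symm
  rw [hG] at h
  simp only [ContinuousLinearMap.neg_apply, inner_neg_left] at h
  rw [real_inner_comm] at h
  linarith

lemma exp_skew_isometry {G : X →L[ℝ] X} (hG : ContinuousLinearMap.adjoint G = -G)
    (t : ℝ) (x : X) : ‖exp (t • G) x‖ = ‖x‖ := by
  have h := energy_identity G x t
  simp only [skew_inner_zero hG, mul_zero, intervalIntegral.integral_zero, add_zero] at h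
  have h1 : (0:ℝ) ≤ ‖exp (t • G) x‖ := norm_nonneg _
  have h2 : (0:ℝ) ≤ ‖x‖ := norm_nonneg _
  nlinarith [sq_nonneg (‖exp (t • G) x‖ - ‖x‖), sq_nonneg (‖exp (t • G) x‖ + ‖x‖)]

lemma obs_neg (A : X →L[ℝ] X) (hA : ContinuousLinearMap.adjoint A = -A)
    (C : X →L[ℝ] Y) (T δ : ℝ)
    (hobs : ∀ x : X, δ * ‖x‖ ^ 2 ≤ ∫ s in (0:ℝ)..T, ‖C (exp (s • A) x)‖ ^ 2) :
    ∀ x : X, δ * ‖x‖ ^ 2 ≤ ∫ s in (0:ℝ)..T, ‖C (exp (s • (-A)) x)‖ ^ 2 := by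
  intro x
  set y : X := exp ((-T) • A) x with hy
  have hfactor : ∀ s : ℝ, exp (s • (-A)) x = exp ((T - s) • A) y := by
    intro s
    have hc : Commute ((T - s) • A) ((-T) • A) := ((Commute.refl A).smul_left _).smul_right _
    have := exp_add_of_commute_of_mem_ball (𝕂 := ℝ) hc ((expSeries_radius_eq_top ℝ (X →L[ℝ] X)).symm ▸ edist_lt_top _ _) ((expSeries_radius_eq_top ℝ (X →L[ℝ] X)).symm ▸ edist_lt_top _ _)
    have h2 : (T - s) • A + (-T) • A = s • (-A) := by
      rw [← add_smul]; rw [smul_neg, ← neg_smul]; ring_nf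
    rw [h2] at this
    rw [hy, this]
    simp [ContinuousLinearMap.mul_apply]
  have hsub : (∫ s in (0:ℝ)..T, ‖C (exp (s • (-A)) x)‖ ^ 2)
      = ∫ s in (0:ℝ)..T, ‖C (exp (s • A) y)‖ ^ 2 := by
    have := intervalIntegral.integral_comp_sub_left
      (a := (0:ℝ)) (b := T) (fun u => ‖C (exp (u • A) y)‖ ^ 2) T
    simp only [sub_zero, sub_self] at this
    calc (∫ s in (0:ℝ)..T, ‖C (exp (s • (-A)) x)‖ ^ 2)
        = ∫ s in (0:ℝ)..T, ‖C (exp ((T - s) • A) y)‖ ^ 2 := by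
          congr 1; ext s; rw [hfactor s]
      _ = _ := this
  rw [hsub]
  have hnorm : ‖y‖ = ‖x‖ := exp_skew_isometry hA (-T) x
  calc δ * ‖x‖ ^ 2 = δ * ‖y‖ ^ 2 := by rw [hnorm]
    _ ≤ _ := hobs y

lemma key_decay (A : X →L[ℝ] X) (hA : ContinuousLinearMap.adjoint A = -A)
    (C : X →L[ℝ] Y) (T δ : ℝ) (hT : 0 < T) (hδ : 0 < δ)
    (hobs : ∀ x : X, δ * ‖x‖ ^ 2 ≤ ∫ s in (0:ℝ)..T, ‖C (exp (s • A) x)‖ ^ 2) :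
    ∃ M : ℝ, 0 ≤ M ∧ ∃ κ₀ : ℝ, 0 < κ₀ ∧ ∀ κ ∈ Ioo 0 κ₀,
      0 ≤ 1 - 2 * δ * κ + M * κ ^ 2 ∧
      ‖exp (T • (A - κ • ((ContinuousLinearMap.adjoint C).comp C)))‖
        ≤ Real.sqrt (1 - 2 * δ * κ + M * κ ^ 2) := by
  set P : X →L[ℝ] X := (ContinuousLinearMap.adjoint C).comp C with hP
  set R : ℝ := T * (Real.exp (T * ‖A‖) * (‖P‖ * Real.exp (T * (‖A‖ + ‖P‖)))) with hR
  have hR0 : 0 ≤ R := by positivity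
  set M : ℝ := 2 * (2 * T * R * ‖C‖ ^ 2) with hM
  have hM0 : 0 ≤ M := by positivity
  refine ⟨M, hM0, min 1 (1 / (2 * δ)), lt_min one_pos (by positivity), ?_⟩
  rintro κ ⟨hκ0, hκ1⟩
  have hκle1 : κ ≤ 1 := le_of_lt (lt_of_lt_of_le hκ1 (min_le_left _ _))
  have hκδ : κ < 1 / (2 * δ) := lt_of_lt_of_le hκ1 (min_le_right _ _)
  have hnonneg : 0 ≤ 1 - 2 * δ * κ + M * κ ^ 2 := by
    have : 2 * δ * κ < 1 := by
      rw [lt_div_iff₀ (by positivity)] at hκδ; linarith [hκδ]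
    nlinarith [sq_nonneg κ, hM0]
  refine ⟨hnonneg, ?_⟩
  set B : X →L[ℝ] X := A - κ • P with hB
  -- uniform bound on semigroup difference
  have hdiff : ∀ s ∈ Icc (0:ℝ) T, ‖exp (s • B) - exp (s • A)‖ ≤ κ * R := by
    intro s hs
    have h := my_exp_diff B A hs.1
    have hBA : ‖B - A‖ = κ * ‖P‖ := by
      rw [hB]
      simp only [sub_sub_cancel_left, norm_neg]
      rw [norm_smul κ P, Real.norm_eq_abs, abs_of_pos hκ0]
    have hnB : ‖B‖ ≤ ‖A‖ + ‖P‖ := by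
      refine (norm_sub_le A (κ • P)).trans ?_
      have : ‖κ • P‖ = κ * ‖P‖ := by
        rw [norm_smul κ P, Real.norm_eq_abs, abs_of_pos hκ0]
      rw [this]
      nlinarith [norm_nonneg P]
    refine h.trans ?_
    have e1 : Real.exp (s * ‖A‖) ≤ Real.exp (T * ‖A‖) :=
      Real.exp_le_exp.2 (mul_le_mul_of_nonneg_right hs.2 (norm_nonneg A))
    have e2 : Real.exp (s * ‖B‖) ≤ Real.exp (T * (‖A‖ + ‖P‖)) := by
      refine Real.exp_le_exp.2 ?_
      calc s * ‖B‖ ≤ T * ‖B‖ := mul_le_mul_of_nonneg_right hs.2 (norm_nonneg B)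
        _ ≤ T * (‖A‖ + ‖P‖) := mul_le_mul_of_nonneg_left hnB hT.le
    rw [hBA, hR]
    calc s * (Real.exp (s * ‖A‖) * (κ * ‖P‖ * Real.exp (s * ‖B‖)))
        ≤ T * (Real.exp (T * ‖A‖) * (κ * ‖P‖ * Real.exp (T * (‖A‖ + ‖P‖)))) := by
          refine mul_le_mul hs.2 ?_ (by positivity) hT.le
          refine mul_le_mul e1 ?_ (by positivity) (Real.exp_nonneg _)
          exact mul_le_mul_of_nonneg_left e2 (by positivity)
      _ = κ * (T * (Real.exp (T * ‖A‖) * (‖P‖ * Real.exp (T * (‖A‖ + ‖P‖))))) := by ring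
  -- pointwise energy computation
  refine ContinuousLinearMap.opNorm_le_bound _ (Real.sqrt_nonneg _) fun x => ?_
  have hBy : ∀ y : X, ⟪B y, y⟫ = -(κ * ‖C y‖ ^ 2) := by
    intro y
    have : B y = A y - κ • (P y) := by simp [hB]
    rw [this, inner_sub_left, real_inner_smul_left, skew_inner_zero hA]
    have : ⟪P y, y⟫ = ‖C y‖ ^ 2 := by
      rw [hP]
      simp only [ContinuousLinearMap.comp_apply]
      rw [ContinuousLinearMap.adjoint_inner_left, real_inner_self_eq_norm_sq]
    rw [this]; ring
  have henergy : ‖exp (T • B) x‖ ^ 2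
      = ‖x‖ ^ 2 - 2 * κ * ∫ s in (0:ℝ)..T, ‖C (exp (s • B) x)‖ ^ 2 := by
    rw [energy_identity B x T]
    have : (fun s : ℝ => 2 * ⟪B (exp (s • B) x), exp (s • B) x⟫)
        = fun s : ℝ => (-(2 * κ)) * ‖C (exp (s • B) x)‖ ^ 2 := by
      ext s; rw [hBy]; ring
    rw [this, intervalIntegral.integral_const_mul]
    ring
  -- lower bound on the observation integral
  have hlow : δ * ‖x‖ ^ 2 - κ * (2 * T * R * ‖C‖ ^ 2) * ‖x‖ ^ 2
      ≤ ∫ s in (0:ℝ)..T, ‖C (exp (s • B) x)‖ ^ 2 := by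
    have hpt : ∀ s ∈ Icc (0:ℝ) T,
        ‖C (exp (s • A) x)‖ ^ 2 - 2 * (κ * R * ‖C‖ ^ 2 * ‖x‖ ^ 2)
          ≤ ‖C (exp (s • B) x)‖ ^ 2 := by
      intro s hs
      set a := ‖C (exp (s • B) x)‖ with ha
      set b := ‖C (exp (s • A) x)‖ with hb'
      have hab : b ≤ a + ‖C‖ * (κ * R) * ‖x‖ := by
        have : C (exp (s • A) x) = C (exp (s • B) x)
            + C ((exp (s • A) - exp (s • B)) x) := by
          simp only [ContinuousLinearMap.sub_apply, map_sub]
          abel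
        rw [hb', this]
        refine (norm_add_le _ _).trans ?_
        gcongr
        refine (C.le_opNorm _).trans ?_
        have h1 : ‖(exp (s • A) - exp (s • B)) x‖ ≤ (κ * R) * ‖x‖ := by
          refine ((exp (s • A) - exp (s • B)).le_opNorm x).trans ?_
          refine mul_le_mul_of_nonneg_right ?_ (norm_nonneg x)
          rw [norm_sub_rev]
          exact hdiff s hs
        calc ‖C‖ * ‖(exp (s • A) - exp (s • B)) x‖
            ≤ ‖C‖ * ((κ * R) * ‖x‖) := mul_le_mul_of_nonneg_left h1 (norm_nonneg C)
          _ = ‖C‖ * (κ * R) * ‖x‖ := by ring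
      have hbc : b ≤ ‖C‖ * ‖x‖ := by
        rw [hb']
        refine (C.le_opNorm _).trans ?_
        rw [exp_skew_isometry hA s x]
      have ha0 : 0 ≤ a := norm_nonneg _
      have hb0 : 0 ≤ b := norm_nonneg _
      have hd0 : 0 ≤ ‖C‖ * (κ * R) * ‖x‖ := by positivity
      set d := ‖C‖ * (κ * R) * ‖x‖ with hd
      have key : b ^ 2 - 2 * ((‖C‖ * ‖x‖) * d) ≤ a ^ 2 := by
        rcases le_total b d with h | h
        · nlinarith
        · nlinarith [sq_nonneg (a - (b - d))]
      refine le_trans ?_ key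
      have : (‖C‖ * ‖x‖) * d = κ * R * ‖C‖ ^ 2 * ‖x‖ ^ 2 := by
        rw [hd]; ring
      rw [this]
    have hcA : Continuous fun s : ℝ => ‖C (exp (s • A) x)‖ ^ 2 :=
      (C.continuous.comp (exp_apply_continuous A x)).norm.pow 2
    have hcB : Continuous fun s : ℝ => ‖C (exp (s • B) x)‖ ^ 2 :=
      (C.continuous.comp (exp_apply_continuous B x)).norm.pow 2
    have hiA : IntervalIntegrable (fun s : ℝ => ‖C (exp (s • A) x)‖ ^ 2)
        MeasureTheory.volume 0 T := hcA.intervalIntegrable 0 T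
    have hint : (∫ s in (0:ℝ)..T, (‖C (exp (s • A) x)‖ ^ 2 - 2 * (κ * R * ‖C‖ ^ 2 * ‖x‖ ^ 2)))
        ≤ ∫ s in (0:ℝ)..T, ‖C (exp (s • B) x)‖ ^ 2 := by
      refine intervalIntegral.integral_mono_on hT.le ?_ ?_ hpt
      · exact (hcA.sub continuous_const).intervalIntegrable 0 T
      · exact hcB.intervalIntegrable 0 T
    refine le_trans ?_ hint
    rw [intervalIntegral.integral_sub hiA (intervalIntegrable_const)]
    rw [intervalIntegral.integral_const]
    have := hobs x
    have harith : T • (2 * (κ * R * ‖C‖ ^ 2 * ‖x‖ ^ 2)) = κ * (2 * T * R * ‖C‖ ^ 2) * ‖x‖ ^ 2 := by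
      rw [smul_eq_mul]; ring
    rw [sub_zero] at *
    linarith [this, harith.ge, harith.le]
  -- combine
  have hsq : ‖exp (T • B) x‖ ^ 2 ≤ (1 - 2 * δ * κ + M * κ ^ 2) * ‖x‖ ^ 2 := by
    rw [henergy, hM]
    nlinarith [hlow, hκ0.le]
  calc ‖exp (T • B) x‖ = Real.sqrt (‖exp (T • B) x‖ ^ 2) := by
        rw [Real.sqrt_sq (norm_nonneg _)]
    _ ≤ Real.sqrt ((1 - 2 * δ * κ + M * κ ^ 2) * ‖x‖ ^ 2) := Real.sqrt_le_sqrt hsq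
    _ = Real.sqrt (1 - 2 * δ * κ + M * κ ^ 2) * ‖x‖ := by
        rw [Real.sqrt_mul hnonneg, Real.sqrt_sq (norm_nonneg x)]

end Helpers

/-- For a bounded skew-adjoint `A` and an exactly observable bounded output operator `C`,
the composition of the backward and forward colocated-feedback semigroups at time `T`
has norm at most `1 - 2δκ + Mκ²` for all small enough gains `κ`. -/
theorem bfn_contraction_skew
    {X Y : Type*} [NormedAddCommGroup X] [InnerProductSpace ℝ X] [CompleteSpace X]
    [NormedAddCommGroup Y] [InnerProductSpace ℝ Y] [CompleteSpace Y]
    (A : X →L[ℝ] X) (hA : ContinuousLinearMap.adjoint A = -A)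
    (C : X →L[ℝ] Y) (T δ : ℝ) (hT : 0 < T) (hδ : 0 < δ)
    (hobs : ∀ x : X, δ * ‖x‖ ^ 2 ≤ ∫ s in (0:ℝ)..T, ‖C (exp (s • A) x)‖ ^ 2) :
    ∃ M : ℝ, 0 ≤ M ∧ ∃ κ₀ : ℝ, 0 < κ₀ ∧ ∀ κ ∈ Ioo 0 κ₀,
      ‖(exp (T • (-A - κ • ((ContinuousLinearMap.adjoint C).comp C)))).comp
          (exp (T • (A - κ • ((ContinuousLinearMap.adjoint C).comp C))))‖
        ≤ 1 - 2 * δ * κ + M * κ ^ 2 := by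
  obtain ⟨M₁, hM₁, κ₁, hκ₁, h₁⟩ := key_decay A hA C T δ hT hδ hobs
  have hA' : ContinuousLinearMap.adjoint (-A) = -(-A) := by
    rw [map_neg, hA]
  obtain ⟨M₂, hM₂, κ₂, hκ₂, h₂⟩ := key_decay (-A) hA' C T δ hT hδ (obs_neg A hA C T δ hobs)
  refine ⟨max M₁ M₂, le_trans hM₁ (le_max_left _ _), min κ₁ κ₂, lt_min hκ₁ hκ₂, ?_⟩
  rintro κ ⟨h0, h1⟩
  have m1 := h₁ κ ⟨h0, lt_of_lt_of_le h1 (min_le_left _ _)⟩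
  have m2 := h₂ κ ⟨h0, lt_of_lt_of_le h1 (min_le_right _ _)⟩
  have hz1 : 1 - 2 * δ * κ + M₁ * κ ^ 2 ≤ 1 - 2 * δ * κ + (max M₁ M₂) * κ ^ 2 := by
    have := le_max_left M₁ M₂
    nlinarith [sq_nonneg κ]
  have hz2 : 1 - 2 * δ * κ + M₂ * κ ^ 2 ≤ 1 - 2 * δ * κ + (max M₁ M₂) * κ ^ 2 := by
    have := le_max_right M₁ M₂
    nlinarith [sq_nonneg κ]
  have hz0 : 0 ≤ 1 - 2 * δ * κ + (max M₁ M₂) * κ ^ 2 := le_trans m1.1 hz1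
  calc ‖(exp (T • (-A - κ • ((ContinuousLinearMap.adjoint C).comp C)))).comp
          (exp (T • (A - κ • ((ContinuousLinearMap.adjoint C).comp C))))‖
      ≤ ‖exp (T • (-A - κ • ((ContinuousLinearMap.adjoint C).comp C)))‖
        * ‖exp (T • (A - κ • ((ContinuousLinearMap.adjoint C).comp C)))‖ :=
        ContinuousLinearMap.opNorm_comp_le _ _
    _ ≤ Real.sqrt (1 - 2 * δ * κ + (max M₁ M₂) * κ ^ 2)
        * Real.sqrt (1 - 2 * δ * κ + (max M₁ M₂) * κ ^ 2) := by
        refine mul_le_mul (m2.2.trans (Real.sqrt_le_sqrt hz2))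
          (m1.2.trans (Real.sqrt_le_sqrt hz1)) (norm_nonneg _) (Real.sqrt_nonneg _)
    _ = 1 - 2 * δ * κ + (max M₁ M₂) * κ ^ 2 := Real.mul_self_sqrt hz0
end

section
/- Let X be a real Banach space and let A, B : X → X be bounded linear operators. Then for every t ≥ 0, the semigroup perturbation (Duhamel) formula holds: e^{t(A+B)} = e^{tA} + ∫₀ᵗ e^{(t−s)A} ∘ B ∘ e^{s(A+B)} ds, where the integral is a Bochner integral in the space of bounded operators on X. -/
set_option synthInstance.maxHeartbeats 1000000
set_option maxHeartbeats 1000000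


open NormedSpace ContinuousLinearMap intervalIntegral

/-- **Semigroup perturbation (Duhamel) formula** for bounded generators on a Banach space:
`e^{t(A+B)} = e^{tA} + ∫₀ᵗ e^{(t−s)A} B e^{s(A+B)} ds`. -/
theorem semigroup_perturbation_formula
    {X : Type*} [NormedAddCommGroup X] [NormedSpace ℝ X] [CompleteSpace X]
    (A B : X →L[ℝ] X) :
    ∀ t : ℝ, 0 ≤ t →
      NormedSpace.exp (t • (A + B)) =
        NormedSpace.exp (t • A) +
          ∫ s in (0:ℝ)..t, ((NormedSpace.exp ((t - s) • A)).comp B).comp (NormedSpace.exp (s • (A + B))) := by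
  intro t _ht
  have hint : ∀ s : ℝ,
      ((NormedSpace.exp ((t - s) • A)).comp B).comp (NormedSpace.exp (s • (A + B)))
        = NormedSpace.exp ((t - s) • A) * B * NormedSpace.exp (s • (A + B)) := fun s => rfl
  have hderiv : ∀ s ∈ Set.uIcc (0:ℝ) t,
      HasDerivAt (fun s : ℝ => NormedSpace.exp ((t - s) • A) * NormedSpace.exp (s • (A + B)))
        (NormedSpace.exp ((t - s) • A) * B * NormedSpace.exp (s • (A + B))) s := by
    intro s _
    have h1 : HasDerivAt (fun s : ℝ => NormedSpace.exp ((t - s) • A))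
        (-(NormedSpace.exp ((t - s) • A) * A)) s := by
      have hin : HasDerivAt (fun x : ℝ => t - x) (-1) s := by
        simpa using (hasDerivAt_id s).const_sub t
      have := (hasDerivAt_exp_smul_const (𝕂 := ℝ) A (t - s)).scomp s hin
      simp at this
      exact this
    have h2 : HasDerivAt (fun s : ℝ => NormedSpace.exp (s • (A + B)))
        (NormedSpace.exp (s • (A + B)) * (A + B)) s := hasDerivAt_exp_smul_const (𝕂 := ℝ) (A + B) s
    have h2' : HasDerivAt (fun s : ℝ => NormedSpace.exp (s • (A + B)))
        ((A + B) * NormedSpace.exp (s • (A + B))) s := hasDerivAt_exp_smul_const' (𝕂 := ℝ) (A + B) s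
    have := h1.mul h2'
    refine this.congr_deriv ?_
    have hcomm : NormedSpace.exp ((t - s) • A) * A = A * NormedSpace.exp ((t - s) • A) :=
      (((Commute.refl A).smul_right (t - s)).exp_right).symm
    noncomm_ring [hcomm]
  have hcont : Continuous fun s : ℝ =>
      NormedSpace.exp ((t - s) • A) * B * NormedSpace.exp (s • (A + B)) := by
    apply Continuous.mul
    apply Continuous.mul
    · exact (differentiable_exp_smul_const ℝ A).continuous.comp (continuous_const.sub continuous_id)
    · exact continuous_const
    · exact (differentiable_exp_smul_const ℝ (A + B)).continuous
  have key := intervalIntegral.integral_eq_sub_of_hasDerivAt hderiv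
      (hcont.intervalIntegrable 0 t)
  simp only [hint]
  rw [key]
  simp [exp_zero]
end

section
/- Let X and Y be real Hilbert spaces, A : X → X and C : X → Y bounded linear operators, T > 0, f : [0,T] → X continuous, and y ∈ L²(0,T;Y). Assume the system is exactly observable at time T with constant δ > 0. Then the cost function J(x) := ½ ∫₀ᵀ ‖y(s) − C z[x](s)‖² ds, where z[x](t) := e^{tA} x + ∫₀ᵗ e^{(t−s)A} f(s) ds, has a unique minimizer x° ∈ X, i.e. there exists a unique x° with J(x°) ≤ J(x) for all x ∈ X. -/
open MeasureTheory NormedSpace ContinuousLinearMap Set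

/-- The mild solution `z[x](t) = e^{tA} x + ∫₀ᵗ e^{(t−s)A} f(s) ds` of
`ż = Az + f`, `z(0) = x`, for a bounded generator `A`. -/
noncomputable def mildSol {X : Type*} [NormedAddCommGroup X] [InnerProductSpace ℝ X]
    [CompleteSpace X] (A : X →L[ℝ] X) (f : ℝ → X) (x : X) (t : ℝ) : X :=
  exp (t • A) x + ∫ s in (0:ℝ)..t, exp ((t - s) • A) (f s)

/-- The output-error cost `J(x) = ½ ∫₀ᵀ ‖y(s) − C z[x](s)‖² ds`. -/
noncomputable def outputCost {X Y : Type*} [NormedAddCommGroup X] [InnerProductSpace ℝ X]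
    [CompleteSpace X] [NormedAddCommGroup Y] [InnerProductSpace ℝ Y] [CompleteSpace Y]
    (A : X →L[ℝ] X) (C : X →L[ℝ] Y) (f : ℝ → X) (y : ℝ → Y) (T : ℝ) (x : X) : ℝ :=
  (1 / 2) * ∫ s in (0:ℝ)..T, ‖y s - C (mildSol A f x s)‖ ^ 2

section Helpers

open RealInnerProductSpace

variable {α : Type*} {m : MeasurableSpace α} {μ : Measure α}
variable {E : Type*} [NormedAddCommGroup E] [InnerProductSpace ℝ E]

/-- The pointwise inner product of two `L²` functions is integrable. -/
lemma memL2_inner_integrable {f g : α → E} (hf : MemLp f 2 μ) (hg : MemLp g 2 μ) :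
    Integrable (fun a => ⟪f a, g a⟫) μ := by
  have h := MeasureTheory.L2.integrable_inner (𝕜 := ℝ) (hf.toLp f) (hg.toLp g)
  refine h.congr ?_
  filter_upwards [hf.coeFn_toLp, hg.coeFn_toLp] with a ha hb
  rw [ha, hb]

/-- A function continuous on `[0, T]` is in `L²` of `volume.restrict (Ioc 0 T)`. -/
lemma contOn_memL2 {T : ℝ} {g : ℝ → E} (hg : ContinuousOn g (Icc 0 T)) :
    MemLp g 2 (volume.restrict (Ioc 0 T)) := by
  haveI : IsFiniteMeasure (volume.restrict (Ioc (0:ℝ) T)) :=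
    ⟨by rw [Measure.restrict_apply_univ]; exact measure_Ioc_lt_top⟩
  obtain ⟨M, hM⟩ := isCompact_Icc.exists_bound_of_continuousOn hg
  refine MemLp.of_bound ?_ M ?_
  · exact (hg.aestronglyMeasurable measurableSet_Icc).mono_measure
      (Measure.restrict_mono Ioc_subset_Icc_self le_rfl)
  · rw [ae_restrict_iff' measurableSet_Ioc]
    exact ae_of_all _ fun s hs => hM s (Ioc_subset_Icc_self hs)

end Helpers

set_option maxHeartbeats 1000000 in
set_option synthInstance.maxHeartbeats 100000 in
open RealInnerProductSpace in
/-- Under exact observability, the output-error cost `J` has a unique minimizer. -/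
theorem outputCost_exists_unique_minimizer
    {X Y : Type*} [NormedAddCommGroup X] [InnerProductSpace ℝ X] [CompleteSpace X]
    [NormedAddCommGroup Y] [InnerProductSpace ℝ Y] [CompleteSpace Y]
    (A : X →L[ℝ] X) (C : X →L[ℝ] Y) (T δ : ℝ) (hT : 0 < T) (hδ : 0 < δ)
    (f : ℝ → X) (hf : ContinuousOn f (Icc 0 T))
    (y : ℝ → Y) (hy : MemLp y 2 (volume.restrict (Ioc 0 T)))
    (hobs : ∀ x : X, δ * ‖x‖ ^ 2 ≤ ∫ s in (0:ℝ)..T, ‖C (exp (s • A) x)‖ ^ 2) :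
    ∃! xo : X, ∀ x : X, outputCost A C f y T xo ≤ outputCost A C f y T x := by
  classical
  letI : NormedAlgebra ℚ (X →L[ℝ] X) := NormedAlgebra.restrictScalars ℚ ℝ _
  haveI : IsFiniteMeasure (volume.restrict (Ioc (0:ℝ) T)) :=
    ⟨by rw [Measure.restrict_apply_univ]; exact measure_Ioc_lt_top⟩
  set μ : Measure ℝ := volume.restrict (Ioc (0:ℝ) T) with hμ
  -- the observation operators and their Gram integrand
  set O : ℝ → X →L[ℝ] Y := fun s => C.comp (exp (s • A)) with hOdef
  have hexp : Continuous fun s : ℝ => exp (s • A) :=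
    exp_continuous.comp (continuous_id.smul continuous_const)
  have hO : Continuous O := continuous_const.clm_comp hexp
  have hadj : Continuous fun s => ContinuousLinearMap.adjoint (O s) :=
    (ContinuousLinearMap.adjoint : (X →L[ℝ] Y) ≃ₗᵢ⋆[ℝ] _).continuous.comp hO
  set Φ : ℝ → X →L[ℝ] X := fun s => (ContinuousLinearMap.adjoint (O s)).comp (O s) with hΦdef
  have hΦ : Continuous Φ := hadj.clm_comp hO
  have hΦint : Integrable Φ μ := hΦ.integrableOn_Ioc
  have hΦx : ∀ x : X, Integrable (fun s => Φ s x) μ :=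
    fun x => hΦint.apply_continuousLinearMap x
  -- the Gram operator
  set G : X →L[ℝ] X := ∫ s, Φ s ∂μ with hGdef
  have hGapp : ∀ x : X, G x = ∫ s, Φ s x ∂μ :=
    fun x => ContinuousLinearMap.integral_apply hΦint x
  have hGinner : ∀ x x' : X, ⟪G x, x'⟫ = ∫ s, ⟪O s x, O s x'⟫ ∂μ := by
    intro x x'
    calc ⟪G x, x'⟫ = innerSL ℝ x' (∫ s, Φ s x ∂μ) := by
          rw [hGapp, innerSL_apply_apply, real_inner_comm]
      _ = ∫ s, innerSL ℝ x' (Φ s x) ∂μ :=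
          ((innerSL ℝ x').integral_comp_comm (hΦx x)).symm
      _ = ∫ s, ⟪O s x, O s x'⟫ ∂μ := by
          refine integral_congr_ae (Filter.Eventually.of_forall fun s => ?_)
          show ⟪x', (ContinuousLinearMap.adjoint (O s)) (O s x)⟫ = ⟪O s x, O s x'⟫
          rw [real_inner_comm]
          exact ContinuousLinearMap.adjoint_inner_left _ _ _
  have hGxx : ∀ x : X, ⟪G x, x⟫ = ∫ s, ‖O s x‖ ^ 2 ∂μ := by
    intro x
    rw [hGinner]
    refine integral_congr_ae (Filter.Eventually.of_forall fun s => ?_)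
    exact real_inner_self_eq_norm_sq _
  have hcoer : ∀ x : X, δ * ‖x‖ ^ 2 ≤ ⟪G x, x⟫ := by
    intro x
    rw [hGxx]
    have h := hobs x
    rwa [intervalIntegral.integral_of_le hT.le] at h
  have hGsymm : ∀ u v : X, ⟪G u, v⟫ = ⟪G v, u⟫ := by
    intro u v
    rw [hGinner, hGinner]
    exact integral_congr_ae (Filter.Eventually.of_forall fun s => real_inner_comm _ _)
  -- the forced part of the mild solution and its continuity
  set w : ℝ → X := fun t => ∫ u in (0:ℝ)..t, exp ((t - u) • A) (f u) with hwdef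
  set ψ : ℝ → X := fun u => exp ((-u) • A) (f u) with hψdef
  have hψ : ContinuousOn ψ (Icc 0 T) :=
    ContinuousOn.clm_apply
      ((exp_continuous.comp (continuous_id.neg.smul continuous_const)).continuousOn) hf
  have hψint : IntegrableOn ψ (Icc 0 T) volume := hψ.integrableOn_compact isCompact_Icc
  have hwfact : ∀ t ∈ Icc (0:ℝ) T, w t = exp (t • A) (∫ u in (0:ℝ)..t, ψ u) := by
    intro t ht
    have hii : IntervalIntegrable ψ volume 0 t := by
      have h1 : IntegrableOn ψ (uIcc 0 t) volume := by
        rw [uIcc_of_le ht.1]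
        exact hψint.mono_set (Icc_subset_Icc le_rfl ht.2)
      exact h1.intervalIntegrable
    have hpt : ∀ u : ℝ, exp ((t - u) • A) (f u) = exp (t • A) (ψ u) := by
      intro u
      have hc : Commute (t • A) ((-u) • A) := ((Commute.refl A).smul_left t).smul_right (-u)
      have hsplit : (t - u) • A = t • A + (-u) • A := by rw [sub_smul, neg_smul, sub_eq_add_neg]
      rw [hψdef, hsplit, exp_add_of_commute hc]
      rfl
    calc w t = ∫ u in (0:ℝ)..t, exp (t • A) (ψ u) := by
          rw [hwdef]; exact intervalIntegral.integral_congr fun u _ => hpt u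
      _ = exp (t • A) (∫ u in (0:ℝ)..t, ψ u) :=
          ContinuousLinearMap.intervalIntegral_comp_comm _ hii
  have hw : ContinuousOn w (Icc 0 T) := by
    have hF : ContinuousOn (fun t => ∫ u in (0:ℝ)..t, ψ u) (Icc 0 T) := by
      have h := intervalIntegral.continuousOn_primitive_interval
        (a := (0:ℝ)) (b := T) (μ := volume) (f := ψ) (by rwa [uIcc_of_le hT.le])
      rwa [uIcc_of_le hT.le] at h
    exact ContinuousOn.congr (ContinuousOn.clm_apply hexp.continuousOn hF) hwfact
  -- the effective data `g` and the vector `b`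
  set g : ℝ → Y := fun s => y s - C (w s) with hgdef
  have hgL2 : MemLp g 2 μ := hy.sub (contOn_memL2 (C.continuous.comp_continuousOn hw))
  have hgint : Integrable g μ := hgL2.integrable one_le_two
  have hgsq : Integrable (fun s => ‖g s‖ ^ 2) μ :=
    (memLp_two_iff_integrable_sq_norm hgL2.1).mp hgL2
  have hOx2 : ∀ x : X, MemLp (fun s => O s x) 2 μ :=
    fun x => contOn_memL2 ((hO.clm_apply continuous_const).continuousOn)
  have hbint : Integrable (fun s => ContinuousLinearMap.adjoint (O s) (g s)) μ := by
    obtain ⟨M, hM⟩ := isCompact_Icc.exists_bound_of_continuousOn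
      (hadj.continuousOn (s := Icc (0:ℝ) T))
    refine Integrable.mono' (hgint.norm.const_mul M) ?_ ?_
    · exact (ContinuousLinearMap.apply ℝ X).flip.aestronglyMeasurable_comp₂
        hadj.aestronglyMeasurable hgL2.1
    · rw [hμ, ae_restrict_iff' measurableSet_Ioc]
      refine ae_of_all _ fun s hs => ?_
      calc ‖ContinuousLinearMap.adjoint (O s) (g s)‖
          ≤ ‖ContinuousLinearMap.adjoint (O s)‖ * ‖g s‖ := le_opNorm _ _
        _ ≤ M * ‖g s‖ :=
            mul_le_mul_of_nonneg_right (hM s (Ioc_subset_Icc_self hs)) (norm_nonneg _)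
  set b : X := ∫ s, ContinuousLinearMap.adjoint (O s) (g s) ∂μ with hbdef
  have hbinner : ∀ x : X, ⟪b, x⟫ = ∫ s, ⟪g s, O s x⟫ ∂μ := by
    intro x
    calc ⟪b, x⟫ = innerSL ℝ x (∫ s, ContinuousLinearMap.adjoint (O s) (g s) ∂μ) := by
          rw [hbdef, innerSL_apply_apply, real_inner_comm]
      _ = ∫ s, innerSL ℝ x (ContinuousLinearMap.adjoint (O s) (g s)) ∂μ :=
          ((innerSL ℝ x).integral_comp_comm hbint).symm
      _ = ∫ s, ⟪g s, O s x⟫ ∂μ := by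
          refine integral_congr_ae (Filter.Eventually.of_forall fun s => ?_)
          show ⟪x, (ContinuousLinearMap.adjoint (O s)) (g s)⟫ = ⟪g s, O s x⟫
          rw [real_inner_comm]
          exact ContinuousLinearMap.adjoint_inner_left _ _ _
  -- the quadratic expansion of the cost
  set K : ℝ := (1 / 2) * ∫ s, ‖g s‖ ^ 2 ∂μ with hKdef
  have hJ : ∀ x : X, outputCost A C f y T x = K - ⟪b, x⟫ + (1 / 2) * ⟪G x, x⟫ := by
    intro x
    have hOx : MemLp (fun s => O s x) 2 μ := hOx2 x
    have hOxsq : Integrable (fun s => ‖O s x‖ ^ 2) μ :=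
      (memLp_two_iff_integrable_sq_norm hOx.1).mp hOx
    have hinner : Integrable (fun s => ⟪g s, O s x⟫) μ := memL2_inner_integrable hgL2 hOx
    have h1 : outputCost A C f y T x = (1 / 2) * ∫ s, ‖g s - O s x‖ ^ 2 ∂μ := by
      rw [outputCost, intervalIntegral.integral_of_le hT.le, ← hμ]
      congr 1
      refine integral_congr_ae (Filter.Eventually.of_forall fun s => ?_)
      show ‖y s - C (mildSol A f x s)‖ ^ 2 = ‖g s - O s x‖ ^ 2
      have hms : y s - C (mildSol A f x s) = g s - O s x := by
        have hm : mildSol A f x s = exp (s • A) x + w s := rfl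
        rw [hm, map_add, hgdef]
        show y s - (C (exp (s • A) x) + C (w s))
          = (y s - C (w s)) - C (exp (s • A) x)
        abel
      rw [hms]
    have hsplit : ∫ s, ‖g s - O s x‖ ^ 2 ∂μ
        = (∫ s, ‖g s‖ ^ 2 ∂μ) - 2 * (∫ s, ⟪g s, O s x⟫ ∂μ) + ∫ s, ‖O s x‖ ^ 2 ∂μ := by
      have hpt : ∀ s : ℝ, ‖g s - O s x‖ ^ 2
          = ‖g s‖ ^ 2 - 2 * ⟪g s, O s x⟫ + ‖O s x‖ ^ 2 := fun s => norm_sub_sq_real _ _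
      calc ∫ s, ‖g s - O s x‖ ^ 2 ∂μ
          = ∫ s, (‖g s‖ ^ 2 - 2 * ⟪g s, O s x⟫ + ‖O s x‖ ^ 2) ∂μ :=
            integral_congr_ae (Filter.Eventually.of_forall hpt)
        _ = (∫ s, (‖g s‖ ^ 2 - 2 * ⟪g s, O s x⟫) ∂μ) + ∫ s, ‖O s x‖ ^ 2 ∂μ :=
            integral_add (hgsq.sub (hinner.const_mul 2)) hOxsq
        _ = (∫ s, ‖g s‖ ^ 2 ∂μ) - (∫ s, 2 * ⟪g s, O s x⟫ ∂μ) + ∫ s, ‖O s x‖ ^ 2 ∂μ := by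
            rw [integral_sub hgsq (hinner.const_mul 2)]
        _ = (∫ s, ‖g s‖ ^ 2 ∂μ) - 2 * (∫ s, ⟪g s, O s x⟫ ∂μ) + ∫ s, ‖O s x‖ ^ 2 ∂μ := by
            rw [integral_const_mul]
    rw [h1, hsplit, ← hbinner, hGxx, hKdef]
    ring
  -- Lax–Milgram: the Gram operator is invertible
  set Bl : X →ₗ[ℝ] X →ₗ[ℝ] ℝ := LinearMap.mk₂ ℝ (fun x x' => ⟪G x, x'⟫)
    (fun m₁ m₂ n => by simp [inner_add_left])
    (fun c m n => by simp [real_inner_smul_left])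
    (fun m n₁ n₂ => by simp [inner_add_right])
    (fun c m n => by simp [real_inner_smul_right]) with hBldef
  set B : X →L[ℝ] X →L[ℝ] ℝ := LinearMap.mkContinuous₂ Bl ‖G‖ (fun x x' => by
    calc ‖Bl x x'‖ = |⟪G x, x'⟫| := rfl
      _ ≤ ‖G x‖ * ‖x'‖ := abs_real_inner_le_norm _ _
      _ ≤ ‖G‖ * ‖x‖ * ‖x'‖ :=
          mul_le_mul_of_nonneg_right (G.le_opNorm x) (norm_nonneg _)) with hBdef
  have hBapp : ∀ u v : X, B u v = ⟪G u, v⟫ := fun u v => rfl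
  have hB : IsCoercive B := by
    refine ⟨δ, hδ, fun u => ?_⟩
    rw [hBapp]
    calc δ * ‖u‖ * ‖u‖ = δ * ‖u‖ ^ 2 := by ring
      _ ≤ ⟪G u, u⟫ := hcoer u
  obtain ⟨xo, hGxo⟩ : ∃ xo : X, G xo = b := by
    set eqv := hB.continuousLinearEquivOfBilin with heqvdef
    have heqv : ∀ v : X, eqv v = G v := by
      intro v
      refine ext_inner_right ℝ fun u => ?_
      rw [hB.continuousLinearEquivOfBilin_apply, hBapp]
    exact ⟨eqv.symm b, by rw [← heqv]; exact eqv.apply_symm_apply b⟩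
  -- the quadratic identity around `xo`
  have hquad : ∀ x : X, outputCost A C f y T x
      = outputCost A C f y T xo + (1 / 2) * ⟪G (x - xo), x - xo⟫ := by
    intro x
    have h1 : ⟪G xo, x⟫ = ⟪b, x⟫ := by rw [hGxo]
    have h2 : ⟪G x, xo⟫ = ⟪b, x⟫ := by rw [hGsymm x xo, hGxo]
    have h3 : ⟪G xo, xo⟫ = ⟪b, xo⟫ := by rw [hGxo]
    have e1 : ⟪G (x - xo), x - xo⟫ = ⟪G x, x⟫ - ⟪b, x⟫ - ⟪b, x⟫ + ⟪b, xo⟫ := by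
      rw [map_sub, inner_sub_left, inner_sub_right, inner_sub_right, h2, h1, h3]
      ring
    rw [hJ x, hJ xo, e1, h3]
    ring
  have hmin : ∀ x : X, outputCost A C f y T xo ≤ outputCost A C f y T x := by
    intro x
    rw [hquad x]
    have h0 : 0 ≤ ⟪G (x - xo), x - xo⟫ :=
      le_trans (mul_nonneg hδ.le (sq_nonneg _)) (hcoer (x - xo))
    linarith
  refine ⟨xo, hmin, fun x₁ h₁ => ?_⟩
  have hle := h₁ xo
  have heq2 := hquad x₁
  have h0 : ⟪G (x₁ - xo), x₁ - xo⟫ ≤ 0 := by linarith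
  have hd : δ * ‖x₁ - xo‖ ^ 2 ≤ 0 := le_trans (hcoer _) h0
  have ha : ‖x₁ - xo‖ ^ 2 ≤ 0 := le_of_mul_le_mul_left (by rw [mul_zero]; exact hd) hδ
  have hz : ‖x₁ - xo‖ ^ 2 = 0 := le_antisymm ha (sq_nonneg _)
  exact sub_eq_zero.mp (norm_eq_zero.mp ((pow_eq_zero_iff two_ne_zero).mp hz))
end

section
/- Let X and Y be real Hilbert spaces, A : X → X and C : X → Y bounded linear operators, T > 0, f : [0,T] → X continuous, and y ∈ L²(0,T;Y). Let J(x) := ½ ∫₀ᵀ ‖y(s) − C z[x](s)‖² ds where z[x](t) := e^{tA} x + ∫₀ᵗ e^{(t−s)A} f(s) ds. Then a point x° ∈ X minimizes J (i.e. J(x°) ≤ J(x) for all x) if and only if ∫₀ᵀ e^{sA*} C* ( y(s) − C z[x°](s) ) ds = 0, where the integral is a Bochner integral in X; equivalently, ∫₀ᵀ ⟨ y(s) − C z[x°](s), C e^{sA} h ⟩ ds = 0 for all h ∈ X. -/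
open MeasureTheory NormedSpace ContinuousLinearMap Set

open RealInnerProductSpace

set_option synthInstance.maxHeartbeats 1000000
set_option maxHeartbeats 1000000
set_option linter.unusedSectionVars false

section aux
variable {X : Type*} [NormedAddCommGroup X] [InnerProductSpace ℝ X] [CompleteSpace X]

lemma commute_smul_smul' (A : X →L[ℝ] X) (t s : ℝ) : Commute (t • A) (s • A) := by
  unfold Commute SemiconjBy
  rw [smul_mul_smul_comm, smul_mul_smul_comm, mul_comm]

lemma exp_smul_apply' (A : X →L[ℝ] X) (t s : ℝ) (v : X) :
    exp ((t - s) • A) v = exp (t • A) (exp ((-s) • A) v) := by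
  let +nondep : NormedAlgebra ℚ (X →L[ℝ] X) := .restrictScalars ℚ ℝ _
  rw [← ContinuousLinearMap.mul_apply, ← exp_add_of_commute (commute_smul_smul' A t (-s)),
    ← add_smul, ← sub_eq_add_neg]

lemma mildSol_continuousOn (A : X →L[ℝ] X) {f : ℝ → X} {T : ℝ} (hT : 0 ≤ T)
    (hf : ContinuousOn f (Icc 0 T)) (x : X) :
    ContinuousOn (mildSol A f x) (Icc 0 T) := by
  let +nondep : NormedAlgebra ℚ (X →L[ℝ] X) := .restrictScalars ℚ ℝ _
  have hexp : Continuous (fun t : ℝ => exp (t • A)) :=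
    exp_continuous.comp (continuous_id.smul continuous_const)
  have hg : ContinuousOn (fun s : ℝ => exp ((-s) • A) (f s)) (Icc 0 T) :=
    ContinuousOn.clm_apply
      ((exp_continuous.comp
        ((continuous_neg.comp continuous_id).smul continuous_const)).continuousOn)
      hf
  have hgi : IntegrableOn (fun s : ℝ => exp ((-s) • A) (f s)) (uIcc 0 T) volume := by
    rw [uIcc_of_le hT]
    exact hg.integrableOn_compact isCompact_Icc
  have hF : ContinuousOn (fun t : ℝ => ∫ s in (0:ℝ)..t, exp ((-s) • A) (f s)) (Icc 0 T) := by
    have := intervalIntegral.continuousOn_primitive_interval hgi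
    rwa [uIcc_of_le hT] at this
  have key : ∀ t ∈ Icc (0:ℝ) T,
      (∫ s in (0:ℝ)..t, exp ((t - s) • A) (f s)) =
      exp (t • A) (∫ s in (0:ℝ)..t, exp ((-s) • A) (f s)) := by
    intro t ht
    have hsub : uIcc (0:ℝ) t ⊆ Icc 0 T := by
      rw [uIcc_of_le ht.1]
      exact Icc_subset_Icc le_rfl ht.2
    have hint : IntervalIntegrable (fun s : ℝ => exp ((-s) • A) (f s)) volume 0 t :=
      (hg.mono hsub).intervalIntegrable
    rw [← ContinuousLinearMap.intervalIntegral_comp_comm (exp (t • A)) hint]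
    exact intervalIntegral.integral_congr fun s _ => exp_smul_apply' A t s (f s)
  have : ContinuousOn
      (fun t : ℝ => exp (t • A) x + exp (t • A)
        (∫ s in (0:ℝ)..t, exp ((-s) • A) (f s))) (Icc 0 T) :=
    (hexp.clm_apply continuous_const).continuousOn.add (hexp.continuousOn.clm_apply hF)
  exact this.congr fun t ht => by rw [mildSol, key t ht]

lemma mildSol_shift (A : X →L[ℝ] X) (f : ℝ → X) (xo x : X) (s : ℝ) :
    mildSol A f x s = mildSol A f xo s + exp (s • A) (x - xo) := by
  simp only [mildSol, map_sub]
  abel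

end aux

/-- A point `x°` minimizes the output-error cost `J` if and only if the output residual is
orthogonal to all simulated outputs, i.e. `∫₀ᵀ e^{sA*} C* (y(s) − C z[x°](s)) ds = 0`. -/
theorem outputCost_minimizer_iff_normal_equation
    {X Y : Type*} [NormedAddCommGroup X] [InnerProductSpace ℝ X] [CompleteSpace X]
    [NormedAddCommGroup Y] [InnerProductSpace ℝ Y] [CompleteSpace Y]
    (A : X →L[ℝ] X) (C : X →L[ℝ] Y) (T : ℝ) (hT : 0 < T)
    (f : ℝ → X) (hf : ContinuousOn f (Icc 0 T))
    (y : ℝ → Y) (hy : MemLp y 2 (volume.restrict (Ioc 0 T)))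
    (xo : X) :
    (∀ x : X, outputCost A C f y T xo ≤ outputCost A C f y T x) ↔
      (∫ s in (0:ℝ)..T, exp (s • ContinuousLinearMap.adjoint A)
          (ContinuousLinearMap.adjoint C (y s - C (mildSol A f xo s))) = 0) := by
  let +nondep : NormedAlgebra ℚ (X →L[ℝ] X) := .restrictScalars ℚ ℝ _
  set μ : Measure ℝ := volume.restrict (Ioc 0 T) with hμ
  haveI : IsFiniteMeasure μ := by
    constructor
    rw [hμ, Measure.restrict_apply_univ, Real.volume_Ioc]
    exact ENNReal.ofReal_lt_top
  -- the residual
  set r : ℝ → Y := fun s => y s - C (mildSol A f xo s) with hr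
  have hCz : ∀ x : X, MemLp (fun s => C (mildSol A f x s)) 2 μ := by
    intro x
    have hc : ContinuousOn (fun s => C (mildSol A f x s)) (Icc 0 T) :=
      C.continuous.comp_continuousOn (mildSol_continuousOn A hT.le hf x)
    obtain ⟨M, hM⟩ := isCompact_Icc.exists_bound_of_continuousOn hc
    refine MemLp.of_bound
      ((hc.mono Ioc_subset_Icc_self).aestronglyMeasurable measurableSet_Ioc) M ?_
    rw [hμ]
    exact (ae_restrict_iff' measurableSet_Ioc).2
      (ae_of_all _ fun s hs => hM s (Ioc_subset_Icc_self hs))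
  have hr2 : MemLp r 2 μ := hy.sub (hCz xo)
  have hr1 : Integrable r μ := hr2.integrable one_le_two
  -- simulated outputs
  set w : X → ℝ → Y := fun h s => C (exp (s • A) h) with hwdef
  have hexpc : Continuous (fun s : ℝ => exp (s • A)) :=
    exp_continuous.comp (continuous_id.smul continuous_const)
  have hwc : ∀ h : X, Continuous (w h) := fun h =>
    C.continuous.comp (hexpc.clm_apply continuous_const)
  -- adjoint identity
  have hstar : ∀ s : ℝ, exp (s • ContinuousLinearMap.adjoint A) =
      ContinuousLinearMap.adjoint (exp (s • A)) := by
    intro s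
    rw [← star_eq_adjoint, ← star_eq_adjoint, star_exp, star_smul]
    norm_num
  -- the normal-equation vector
  set u : ℝ → X := fun s => exp (s • ContinuousLinearMap.adjoint A)
      (ContinuousLinearMap.adjoint C (r s)) with hudef
  have h1 : Continuous (fun s : ℝ => exp (s • ContinuousLinearMap.adjoint A)) :=
    exp_continuous.comp (continuous_id.smul continuous_const)
  have hu_meas : AEStronglyMeasurable u μ := by
    have h2 : AEStronglyMeasurable (fun s => ContinuousLinearMap.adjoint C (r s)) μ :=
      (ContinuousLinearMap.adjoint C).continuous.comp_aestronglyMeasurable hr2.1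
    exact isBoundedBilinearMap_apply.continuous.comp_aestronglyMeasurable
      (h1.aestronglyMeasurable.prodMk h2)
  have hu_int : Integrable u μ := by
    obtain ⟨Me, hMe⟩ := isCompact_Icc.exists_bound_of_continuousOn
      (h1.continuousOn (s := Icc (0:ℝ) T))
    refine Integrable.mono'
      ((hr1.norm.const_mul (Me * ‖ContinuousLinearMap.adjoint C‖))) hu_meas ?_
    rw [hμ]
    refine (ae_restrict_iff' measurableSet_Ioc).2 (ae_of_all _ fun s hs => ?_)
    calc ‖u s‖ ≤ ‖exp (s • ContinuousLinearMap.adjoint A)‖ *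
        ‖ContinuousLinearMap.adjoint C (r s)‖ := ContinuousLinearMap.le_opNorm _ _
      _ ≤ Me * (‖ContinuousLinearMap.adjoint C‖ * ‖r s‖) := by
          refine mul_le_mul (hMe s (Ioc_subset_Icc_self hs))
            ((ContinuousLinearMap.adjoint C).le_opNorm _) (norm_nonneg _) ?_
          exact le_trans (norm_nonneg _) (hMe 0 ⟨le_rfl, hT.le⟩)
      _ = Me * ‖ContinuousLinearMap.adjoint C‖ * ‖r s‖ := by ring
  set v : X := ∫ s, u s ∂μ with hvdef
  -- the key inner-product identity
  have hinner : ∀ h : X, (∫ s, ⟪r s, w h s⟫ ∂μ) = ⟪h, v⟫ := by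
    intro h
    rw [hvdef, ← integral_inner hu_int h]
    refine integral_congr_ae (ae_of_all _ fun s => ?_)
    show (⟪r s, w h s⟫ : ℝ) = ⟪h, u s⟫
    have key : (⟪exp (s • ContinuousLinearMap.adjoint A)
        (ContinuousLinearMap.adjoint C (r s)), h⟫ : ℝ) = ⟪r s, w h s⟫ := by
      rw [hstar s, ContinuousLinearMap.adjoint_inner_left,
        ContinuousLinearMap.adjoint_inner_left]
    exact key.symm.trans (real_inner_comm _ _)
  -- pointwise decomposition of residual at x
  have hres : ∀ (x : X) (s : ℝ), y s - C (mildSol A f x s) = r s - w (x - xo) s := by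
    intro x s
    rw [mildSol_shift A f xo x s, map_add, hr, hwdef]
    beta_reduce
    abel
  -- integrability pieces
  have i1 : Integrable (fun s => ‖r s‖ ^ 2) μ := hr2.norm.integrable_sq
  have i2 : ∀ h : X, Integrable (fun s => (⟪r s, w h s⟫ : ℝ)) μ := by
    intro h
    obtain ⟨Mw, hMw⟩ := isCompact_Icc.exists_bound_of_continuousOn
      ((hwc h).continuousOn (s := Icc (0:ℝ) T))
    refine Integrable.mono' (hr1.norm.const_mul Mw)
      (hr2.1.inner ((hwc h).aestronglyMeasurable)) ?_
    rw [hμ]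
    refine (ae_restrict_iff' measurableSet_Ioc).2 (ae_of_all _ fun s hs => ?_)
    calc ‖(⟪r s, w h s⟫ : ℝ)‖ ≤ ‖r s‖ * ‖w h s‖ := norm_inner_le_norm _ _
      _ ≤ ‖r s‖ * Mw := mul_le_mul_of_nonneg_left (hMw s (Ioc_subset_Icc_self hs)) (norm_nonneg _)
      _ = Mw * ‖r s‖ := mul_comm _ _
  have i3 : ∀ h : X, Integrable (fun s => ‖w h s‖ ^ 2) μ := by
    intro h
    have hcont : Continuous (fun s => ‖w h s‖ ^ 2) := ((hwc h).norm).pow 2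
    exact (hcont.continuousOn.integrableOn_compact isCompact_Icc).mono_set Ioc_subset_Icc_self
  -- cost expansion
  have hJ : ∀ x : X, outputCost A C f y T x = outputCost A C f y T xo
      - ⟪x - xo, v⟫ + (1/2) * ∫ s, ‖w (x - xo) s‖ ^ 2 ∂μ := by
    intro x
    have e1 : outputCost A C f y T x = (1/2) * ∫ s, ‖r s - w (x - xo) s‖ ^ 2 ∂μ := by
      rw [outputCost, intervalIntegral.integral_of_le hT.le]
      congr 1
      exact integral_congr_ae (ae_of_all _ fun s => by dsimp only; rw [hres x s])
    have e0 : outputCost A C f y T xo = (1/2) * ∫ s, ‖r s‖ ^ 2 ∂μ := by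
      rw [outputCost, intervalIntegral.integral_of_le hT.le]
    have esplit : ∫ s, ‖r s - w (x - xo) s‖ ^ 2 ∂μ =
        (∫ s, ‖r s‖ ^ 2 ∂μ) - 2 * (∫ s, (⟪r s, w (x - xo) s⟫ : ℝ) ∂μ)
          + ∫ s, ‖w (x - xo) s‖ ^ 2 ∂μ := by
      calc ∫ s, ‖r s - w (x - xo) s‖ ^ 2 ∂μ
          = ∫ s, (‖r s‖ ^ 2 - 2 * ⟪r s, w (x - xo) s⟫ + ‖w (x - xo) s‖ ^ 2) ∂μ :=
            integral_congr_ae (ae_of_all _ fun s => by dsimp only; rw [norm_sub_sq_real])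
        _ = _ := by
            have isub : Integrable
                (fun s => ‖r s‖ ^ 2 - 2 * (⟪r s, w (x - xo) s⟫ : ℝ)) μ :=
              i1.sub ((i2 (x - xo)).const_mul 2)
            rw [integral_add isub (i3 (x - xo)),
              integral_sub i1 ((i2 (x - xo)).const_mul 2), MeasureTheory.integral_const_mul]
    rw [e1, e0, esplit, hinner (x - xo)]
    ring
  -- identify the interval integral in the statement with v
  have hgoal : (∫ s in (0:ℝ)..T, exp (s • ContinuousLinearMap.adjoint A)
      (ContinuousLinearMap.adjoint C (y s - C (mildSol A f xo s)))) = v := by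
    show (∫ s in (0:ℝ)..T, u s) = v
    rw [intervalIntegral.integral_of_le hT.le]
  rw [hgoal]
  constructor
  · intro hmin
    by_contra hv
    have hN : 0 < ‖v‖ ^ 2 := pow_pos (norm_pos_iff.2 hv) 2
    set I : ℝ := ∫ s, ‖w v s‖ ^ 2 ∂μ with hI
    have hI0 : 0 ≤ I := integral_nonneg fun s => sq_nonneg _
    set Q : ℝ := (1/2) * I with hQdef
    have hQ0 : 0 ≤ Q := mul_nonneg (by norm_num) hI0
    have hkey : ∀ t : ℝ, 0 ≤ -(t * ‖v‖ ^ 2) + t ^ 2 * Q := by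
      intro t
      have hmin' := hmin (xo + t • v)
      rw [hJ (xo + t • v)] at hmin'
      have hx : xo + t • v - xo = t • v := by abel
      rw [hx, real_inner_smul_left, real_inner_self_eq_norm_sq] at hmin'
      have hws : ∫ s, ‖w (t • v) s‖ ^ 2 ∂μ = t ^ 2 * I := by
        rw [hI, ← MeasureTheory.integral_const_mul]
        refine integral_congr_ae (ae_of_all _ fun s => ?_)
        show ‖C (exp (s • A) (t • v))‖ ^ 2 = t ^ 2 * ‖C (exp (s • A) v)‖ ^ 2
        rw [_root_.map_smul, _root_.map_smul, norm_smul, mul_pow, Real.norm_eq_abs, sq_abs]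
      rw [hws] at hmin'
      rw [hQdef]
      linarith
    have hpos : (0:ℝ) < 2 * (Q + 1) := by linarith
    have ht : 0 < ‖v‖ ^ 2 / (2 * (Q + 1)) := div_pos hN hpos
    have h2 := hkey (‖v‖ ^ 2 / (2 * (Q + 1)))
    set t : ℝ := ‖v‖ ^ 2 / (2 * (Q + 1)) with htdef
    have h3 : t * ‖v‖ ^ 2 ≤ t * (t * Q) := by nlinarith [h2]
    have h4 : ‖v‖ ^ 2 ≤ t * Q := le_of_mul_le_mul_left h3 ht
    have h5 : t * Q * (2 * (Q + 1)) = ‖v‖ ^ 2 * Q := by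
      rw [htdef]
      field_simp
    have h6 := mul_le_mul_of_nonneg_right h4 hpos.le
    rw [h5] at h6
    nlinarith [h6, hN, hQ0]
  · intro hv x
    rw [hJ x, hv, inner_zero_right]
    have h6 : 0 ≤ (1/2) * ∫ s, ‖w (x - xo) s‖ ^ 2 ∂μ :=
      mul_nonneg (by norm_num) (integral_nonneg fun s => sq_nonneg _)
    linarith
end

section
/- Let X and Y be real Hilbert spaces, A : X → X a bounded skew-adjoint operator (A* = −A), C : X → Y a bounded linear operator, κ > 0, T > 0, and χ ∈ L²(0,T;Y). Define ε(t) := −κ ∫₀ᵗ e^{(A − κC*C)(t−s)} C* χ(s) ds. Then for all t ∈ [0,T], ‖ε(t)‖ ≤ κ ‖C‖ √t ‖χ‖_{L²(0,T;Y)}. -/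
open MeasureTheory NormedSpace ContinuousLinearMap Set

lemma norm_exp_smul_apply_le_aux
    {X : Type*} [NormedAddCommGroup X] [InnerProductSpace ℝ X] [CompleteSpace X]
    (B : X →L[ℝ] X) (hB : ∀ x : X, inner ℝ (B x) x ≤ (0 : ℝ))
    {t : ℝ} (ht : 0 ≤ t) (x : X) : ‖NormedSpace.exp (t • B) x‖ ≤ ‖x‖ := by
  set y : ℝ → X := fun u => NormedSpace.exp (u • B) x with hy
  have hdy : ∀ u, HasDerivAt y (B (y u)) u := by
    intro u
    have h1 : HasDerivAt (fun u : ℝ => NormedSpace.exp (u • B)) (B * NormedSpace.exp (u • B)) u :=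
      hasDerivAt_exp_smul_const' B u
    have h2 := h1.clm_apply (hasDerivAt_const u x)
    simpa [y, ContinuousLinearMap.mul_apply] using h2
  have hfd : ∀ u, HasDerivAt (fun u => (inner ℝ (y u) (y u) : ℝ))
      (2 * inner ℝ (B (y u)) (y u)) u := by
    intro u
    have h := HasDerivAt.inner ℝ (hdy u) (hdy u)
    refine h.congr_deriv ?_
    rw [real_inner_comm (y u) (B (y u))]
    ring
  have hmono : Antitone fun u => (inner ℝ (y u) (y u) : ℝ) :=
    antitone_of_deriv_nonpos (fun u => (hfd u).differentiableAt) fun u => by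
      rw [(hfd u).deriv]
      have := hB (y u)
      linarith
  have h0 : y 0 = x := by simp [y]
  have hle : (inner ℝ (y t) (y t) : ℝ) ≤ inner ℝ x x := by
    simpa [h0] using hmono ht
  rw [real_inner_self_eq_norm_sq, real_inner_self_eq_norm_sq] at hle
  nlinarith [norm_nonneg (y t), norm_nonneg x]

/-- First-order bound for the noise-driven observer error term:
`‖ε(t)‖ ≤ κ‖C‖√t ‖χ‖_{L²(0,T;Y)}` where
`ε(t) = −κ ∫₀ᵗ e^{(A − κC*C)(t−s)} C* χ(s) ds`. -/
theorem noise_error_first_order_bound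
    {X Y : Type*} [NormedAddCommGroup X] [InnerProductSpace ℝ X] [CompleteSpace X]
    [NormedAddCommGroup Y] [InnerProductSpace ℝ Y] [CompleteSpace Y]
    (A : X →L[ℝ] X) (hA : ContinuousLinearMap.adjoint A = -A)
    (C : X →L[ℝ] Y) (κ T : ℝ) (hκ : 0 < κ) (hT : 0 < T)
    (χ : ℝ → Y) (hχ : MemLp χ 2 (volume.restrict (Ioc 0 T)))
    (ε : ℝ → X)
    (hε : ∀ t : ℝ, ε t = -(κ • ∫ s in (0:ℝ)..t,
      NormedSpace.exp ((t - s) • (A - κ • ((ContinuousLinearMap.adjoint C).comp C)))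
        (ContinuousLinearMap.adjoint C (χ s)))) :
    ∀ t ∈ Icc (0:ℝ) T,
      ‖ε t‖ ≤ κ * ‖C‖ * Real.sqrt t * Real.sqrt (∫ s in (0:ℝ)..T, ‖χ s‖ ^ 2) := by
  intro t ht
  obtain ⟨ht0, htT⟩ := ht
  set B : X →L[ℝ] X := A - κ • ((ContinuousLinearMap.adjoint C).comp C) with hBdef
  -- dissipativity of B
  have hdiss : ∀ x : X, inner ℝ (B x) x ≤ (0 : ℝ) := by
    intro x
    have hAx : (inner ℝ (A x) x : ℝ) = 0 := by
      have h1 : (inner ℝ ((ContinuousLinearMap.adjoint A) x) x : ℝ) = inner ℝ x (A x) :=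
        ContinuousLinearMap.adjoint_inner_left A x x
      rw [hA] at h1
      simp only [ContinuousLinearMap.neg_apply, inner_neg_left] at h1
      have h2 : (inner ℝ x (A x) : ℝ) = inner ℝ (A x) x := real_inner_comm _ _
      linarith [h1, h2]
    have hCx : (inner ℝ (((ContinuousLinearMap.adjoint C).comp C) x) x : ℝ) = ‖C x‖ ^ 2 := by
      simp only [ContinuousLinearMap.comp_apply]
      rw [ContinuousLinearMap.adjoint_inner_left, real_inner_self_eq_norm_sq]
    have : (inner ℝ (B x) x : ℝ) = inner ℝ (A x) x - κ * inner ℝ (((ContinuousLinearMap.adjoint C).comp C) x) x := by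
      simp [hBdef, inner_sub_left, inner_smul_left]
    rw [this, hAx, hCx]
    nlinarith [sq_nonneg ‖C x‖]
  -- contraction
  have hcontr : ∀ s : ℝ, s ≤ t → ∀ z : X, ‖NormedSpace.exp ((t - s) • B) z‖ ≤ ‖z‖ := fun s hs z =>
    norm_exp_smul_apply_le_aux B hdiss (by linarith) z
  -- measure on Ioc 0 t
  have hsub : Ioc (0:ℝ) t ⊆ Ioc 0 T := Ioc_subset_Ioc_right htT
  have hχ2 : MemLp χ 2 (volume.restrict (Ioc 0 t)) :=
    hχ.mono_measure (Measure.restrict_mono hsub le_rfl)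
  haveI : IsFiniteMeasure (volume.restrict (Ioc (0:ℝ) t)) :=
    ⟨by rw [Measure.restrict_apply_univ, Real.volume_Ioc]; exact ENNReal.ofReal_lt_top⟩
  have hχ1 : Integrable χ (volume.restrict (Ioc 0 t)) :=
    hχ2.integrable one_le_two
  -- the bounding function is interval integrable
  have hbound : IntervalIntegrable (fun s => ‖C‖ * ‖χ s‖) volume 0 t := by
    rw [intervalIntegrable_iff_integrableOn_Ioc_of_le ht0]
    exact hχ1.norm.const_mul ‖C‖
  -- pointwise norm bound a.e.
  have hptwise : ∀ᵐ s ∂volume.restrict (Set.uIoc (0:ℝ) t),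
      ‖NormedSpace.exp ((t - s) • B) (ContinuousLinearMap.adjoint C (χ s))‖ ≤ ‖C‖ * ‖χ s‖ := by
    rw [uIoc_of_le ht0]
    filter_upwards [ae_restrict_mem measurableSet_Ioc] with s hs
    calc ‖NormedSpace.exp ((t - s) • B) (ContinuousLinearMap.adjoint C (χ s))‖
        ≤ ‖ContinuousLinearMap.adjoint C (χ s)‖ := hcontr s hs.2 _
      _ ≤ ‖ContinuousLinearMap.adjoint C‖ * ‖χ s‖ := (ContinuousLinearMap.adjoint C).le_opNorm _
      _ = ‖C‖ * ‖χ s‖ := by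
          rw [show ‖ContinuousLinearMap.adjoint C‖ = ‖C‖ from
            LinearIsometryEquiv.norm_map ContinuousLinearMap.adjoint C]
  -- norm of the integral
  have hI : ‖∫ s in (0:ℝ)..t, NormedSpace.exp ((t - s) • B) (ContinuousLinearMap.adjoint C (χ s))‖
      ≤ ∫ s in (0:ℝ)..t, ‖C‖ * ‖χ s‖ := by
    have h := intervalIntegral.norm_integral_le_abs_of_norm_le hptwise hbound
    have habs : |∫ s in (0:ℝ)..t, ‖C‖ * ‖χ s‖| = ∫ s in (0:ℝ)..t, ‖C‖ * ‖χ s‖ := by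
      apply abs_of_nonneg
      apply intervalIntegral.integral_nonneg ht0
      intro s _
      positivity
    rwa [habs] at h
  -- Cauchy–Schwarz on [0, t]
  have hCS : ∫ s in (0:ℝ)..t, ‖χ s‖ ≤ Real.sqrt t * Real.sqrt (∫ s in Ioc (0:ℝ) t, ‖χ s‖ ^ 2) := by
    rw [intervalIntegral.integral_of_le ht0]
    have hpq : Real.HolderConjugate 2 2 := by
      constructor <;> norm_num
    have h2 : (ENNReal.ofReal (2:ℝ)) = 2 := by norm_num
    have hf : MemLp (fun s => ‖χ s‖) (ENNReal.ofReal (2:ℝ)) (volume.restrict (Ioc 0 t)) := by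
      rw [h2]; exact hχ2.norm
    have hg : MemLp (fun _ : ℝ => (1:ℝ)) (ENNReal.ofReal (2:ℝ)) (volume.restrict (Ioc 0 t)) := by
      rw [h2]; exact memLp_const 1
    have hH := integral_mul_le_Lp_mul_Lq_of_nonneg hpq
      (Filter.Eventually.of_forall fun s => norm_nonneg (χ s))
      (Filter.Eventually.of_forall fun _ => zero_le_one) hf hg
    simp only [mul_one, one_mul] at hH
    have hone : ∫ _ : ℝ in Ioc (0:ℝ) t, (1:ℝ) ^ (2:ℝ) ∂volume = t := by
      simp [Real.volume_Ioc, ENNReal.toReal_ofReal ht0, ht0]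
    have hrpow : ∫ s in Ioc (0:ℝ) t, ‖χ s‖ ^ (2:ℝ) ∂volume
        = ∫ s in Ioc (0:ℝ) t, ‖χ s‖ ^ 2 ∂volume := by
      apply integral_congr_ae
      filter_upwards with s
      rw [← Real.rpow_natCast ‖χ s‖ 2]
      norm_num
    rw [hone, hrpow] at hH
    calc ∫ s in Ioc (0:ℝ) t, ‖χ s‖ ∂volume
        ≤ (∫ s in Ioc (0:ℝ) t, ‖χ s‖ ^ 2 ∂volume) ^ (1/2 : ℝ) * t ^ (1/2 : ℝ) := hH
      _ = Real.sqrt t * Real.sqrt (∫ s in Ioc (0:ℝ) t, ‖χ s‖ ^ 2 ∂volume) := by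
          rw [Real.sqrt_eq_rpow, Real.sqrt_eq_rpow]; ring
  -- monotonicity of the L² integral in the interval
  have hsq_int : IntegrableOn (fun s => ‖χ s‖ ^ 2) (Ioc 0 T) volume := by
    have h := hχ.integrable_norm_rpow (by norm_num) (by norm_num)
    have : ENNReal.toReal 2 = (2:ℝ) := by norm_num
    rw [this] at h
    apply h.congr
    filter_upwards with s
    rw [← Real.rpow_natCast ‖χ s‖ 2]
    norm_num
  have hmonoI : ∫ s in Ioc (0:ℝ) t, ‖χ s‖ ^ 2 ≤ ∫ s in Ioc (0:ℝ) T, ‖χ s‖ ^ 2 := by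
    apply setIntegral_mono_set hsq_int
    · filter_upwards with s using sq_nonneg _
    · exact HasSubset.Subset.eventuallyLE hsub
  have hTgoal : (∫ s in (0:ℝ)..T, ‖χ s‖ ^ 2) = ∫ s in Ioc (0:ℝ) T, ‖χ s‖ ^ 2 :=
    intervalIntegral.integral_of_le hT.le
  -- assemble
  rw [hε t, norm_neg, norm_smul, Real.norm_of_nonneg hκ.le]
  calc κ * ‖∫ s in (0:ℝ)..t, NormedSpace.exp ((t - s) • B) (ContinuousLinearMap.adjoint C (χ s))‖
      ≤ κ * ∫ s in (0:ℝ)..t, ‖C‖ * ‖χ s‖ := by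
        exact mul_le_mul_of_nonneg_left hI hκ.le
    _ = κ * (‖C‖ * ∫ s in (0:ℝ)..t, ‖χ s‖) := by
        rw [intervalIntegral.integral_const_mul]
    _ ≤ κ * (‖C‖ * (Real.sqrt t * Real.sqrt (∫ s in Ioc (0:ℝ) t, ‖χ s‖ ^ 2))) := by
        apply mul_le_mul_of_nonneg_left _ hκ.le
        exact mul_le_mul_of_nonneg_left hCS (norm_nonneg C)
    _ ≤ κ * (‖C‖ * (Real.sqrt t * Real.sqrt (∫ s in (0:ℝ)..T, ‖χ s‖ ^ 2))) := by
        rw [hTgoal]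
        have := Real.sqrt_le_sqrt hmonoI
        apply mul_le_mul_of_nonneg_left _ hκ.le
        apply mul_le_mul_of_nonneg_left _ (norm_nonneg C)
        exact mul_le_mul_of_nonneg_left this (Real.sqrt_nonneg t)
    _ = κ * ‖C‖ * Real.sqrt t * Real.sqrt (∫ s in (0:ℝ)..T, ‖χ s‖ ^ 2) := by ring
end

section
/- Let X and Y be real Hilbert spaces, A : X → X a bounded skew-adjoint operator (A* = −A), C : X → Y a bounded linear operator, κ > 0, T > 0, and χ ∈ L²(0,T;Y) satisfying ∫₀ᵀ e^{sA*} C* χ(s) ds = 0. Define ε(t) := −κ ∫₀ᵗ e^{(A − κC*C)(t−s)} C* χ(s) ds. Then ‖ε(T)‖ ≤ (2/3) κ² ‖C‖³ T^{3/2} ‖χ‖_{L²(0,T;Y)}. -/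
open MeasureTheory NormedSpace ContinuousLinearMap Set RealInnerProductSpace


-- Lemma 1: contraction semigroup bound
theorem aux_exp_contraction {X : Type*} [NormedAddCommGroup X] [InnerProductSpace ℝ X]
    [CompleteSpace X] (B : X →L[ℝ] X) (hB : ∀ x, ⟪B x, x⟫ ≤ 0) {t : ℝ} (ht : 0 ≤ t) :
    ‖exp (t • B)‖ ≤ 1 := by
  refine opNorm_le_bound _ zero_le_one (fun x => ?_)
  rw [one_mul]
  set u : ℝ → X := fun r => exp (r • B) x with hu_def
  have hu : ∀ r : ℝ, HasDerivAt u (B (u r)) r := by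
    intro r
    have h1 : HasDerivAt (fun s : ℝ => exp (s • B)) (B * exp (r • B)) r :=
      hasDerivAt_exp_smul_const' B r
    have h2 := h1.clm_apply (hasDerivAt_const r x)
    simpa [hu_def, mul_apply] using h2
  set f : ℝ → ℝ := fun r => ⟪u r, u r⟫ with hf_def
  have hf : ∀ r : ℝ, HasDerivAt f (2 * ⟪B (u r), u r⟫) r := by
    intro r
    have := HasDerivAt.inner ℝ (hu r) (hu r)
    simpa [hf_def, real_inner_comm, two_mul] using this
  have hanti : AntitoneOn f (Icc 0 t) := by
    have hdiff : ∀ r : ℝ, DifferentiableAt ℝ f r := fun r => (hf r).differentiableAt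
    apply antitoneOn_of_deriv_nonpos (convex_Icc 0 t)
    · exact (fun r _ => (hdiff r).continuousAt.continuousWithinAt)
    · intro r _; exact (hdiff r).differentiableWithinAt
    · intro r _
      rw [(hf r).deriv]
      have := hB (u r)
      nlinarith
  have hle : f t ≤ f 0 := hanti (left_mem_Icc.2 ht) (right_mem_Icc.2 ht) ht
  have h0 : f 0 = ‖x‖ ^ 2 := by
    simp [hf_def, hu_def, real_inner_self_eq_norm_sq]
  have hft : f t = ‖u t‖ ^ 2 := by simp [hf_def, real_inner_self_eq_norm_sq]
  rw [hft, h0] at hle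
  nlinarith [norm_nonneg (u t), norm_nonneg x]

-- Duhamel formula / difference bound
theorem aux_duhamel {X : Type*} [NormedAddCommGroup X] [InnerProductSpace ℝ X]
    [CompleteSpace X] (A L : X →L[ℝ] X)
    (hA1 : ∀ r : ℝ, ‖exp (r • A)‖ ≤ 1)
    (hL1 : ∀ r : ℝ, 0 ≤ r → ‖exp (r • L)‖ ≤ 1)
    {t : ℝ} (ht : 0 ≤ t) :
    ‖exp (t • L) - exp (t • A)‖ ≤ ‖L - A‖ * t := by
  letI : NormedAlgebra ℚ (X →L[ℝ] X) := NormedAlgebra.restrictScalars ℚ ℝ (X →L[ℝ] X)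
  set g : ℝ → (X →L[ℝ] X) := fun r => exp ((t - r) • A) * exp (r • L) with hg_def
  set d : ℝ → (X →L[ℝ] X) := fun r => exp ((t - r) • A) * (L - A) * exp (r • L) with hd_def
  have hg : ∀ r : ℝ, HasDerivAt g (d r) r := by
    intro r
    have hφ : HasDerivAt (fun r : ℝ => t - r) (-1) r := (hasDerivAt_id r).const_sub t
    have h1 : HasDerivAt (fun r : ℝ => exp ((t - r) • A))
        ((-1 : ℝ) • (exp ((t - r) • A) * A)) r :=
      (hasDerivAt_exp_smul_const A (t - r)).scomp r hφ
    have h2 : HasDerivAt (fun r : ℝ => exp (r • L)) (L * exp (r • L)) r :=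
      hasDerivAt_exp_smul_const' L r
    have : HasDerivAt g _ r := h1.mul h2
    convert this using 1
    simp only [hd_def, neg_one_smul, neg_mul, mul_sub, sub_mul, mul_assoc]
    abel
  have hd_cont : Continuous d := by
    apply Continuous.mul
    · apply Continuous.mul
      · exact exp_continuous.comp ((continuous_const.sub continuous_id).smul continuous_const)
      · exact continuous_const
    · exact exp_continuous.comp (continuous_id.smul continuous_const)
  have hftc : ∫ r in (0:ℝ)..t, d r = g t - g 0 :=
    intervalIntegral.integral_eq_sub_of_hasDerivAt (fun r _ => hg r)
      (hd_cont.intervalIntegrable 0 t)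
  have hgt : g t - g 0 = exp (t • L) - exp (t • A) := by
    simp [hg_def, sub_self, zero_smul, exp_zero]
  rw [← hgt, ← hftc]
  calc ‖∫ r in (0:ℝ)..t, d r‖ ≤ ‖L - A‖ * |t - 0| := by
        apply intervalIntegral.norm_integral_le_of_norm_le_const
        intro r hr
        rw [uIoc_of_le ht] at hr
        calc ‖d r‖ ≤ ‖exp ((t - r) • A) * (L - A)‖ * ‖exp (r • L)‖ := opNorm_comp_le _ _
          _ ≤ (‖exp ((t - r) • A)‖ * ‖L - A‖) * ‖exp (r • L)‖ := by
              exact mul_le_mul_of_nonneg_right (opNorm_comp_le _ _) (norm_nonneg _)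
          _ ≤ (1 * ‖L - A‖) * 1 := by
              apply mul_le_mul
              · exact mul_le_mul_of_nonneg_right (hA1 _) (norm_nonneg _)
              · exact hL1 r hr.1.le
              · exact norm_nonneg _
              · positivity
          _ = ‖L - A‖ := by ring
    _ = ‖L - A‖ * t := by rw [sub_zero, abs_of_nonneg ht]


set_option maxHeartbeats 2000000 in
set_option synthInstance.maxHeartbeats 400000 in
/-- Second-order bound for the noise-driven observer error term when the noise is
orthogonal to the simulated outputs:
`‖ε(T)‖ ≤ (2/3) κ² ‖C‖³ T^{3/2} ‖χ‖_{L²(0,T;Y)}`. -/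
theorem noise_error_second_order_bound
    {X Y : Type*} [NormedAddCommGroup X] [InnerProductSpace ℝ X] [CompleteSpace X]
    [NormedAddCommGroup Y] [InnerProductSpace ℝ Y] [CompleteSpace Y]
    (A : X →L[ℝ] X) (hA : ContinuousLinearMap.adjoint A = -A)
    (C : X →L[ℝ] Y) (κ T : ℝ) (hκ : 0 < κ) (hT : 0 < T)
    (χ : ℝ → Y) (hχ : MemLp χ 2 (volume.restrict (Ioc 0 T)))
    (hperp : ∫ s in (0:ℝ)..T, exp (s • ContinuousLinearMap.adjoint A)
        (ContinuousLinearMap.adjoint C (χ s)) = 0)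
    (ε : ℝ → X)
    (hε : ∀ t : ℝ, ε t = -(κ • ∫ s in (0:ℝ)..t,
      exp ((t - s) • (A - κ • ((ContinuousLinearMap.adjoint C).comp C)))
        (ContinuousLinearMap.adjoint C (χ s)))) :
    ‖ε T‖ ≤ (2 / 3) * κ ^ 2 * ‖C‖ ^ 3 * T ^ ((3:ℝ) / 2) *
      Real.sqrt (∫ s in (0:ℝ)..T, ‖χ s‖ ^ 2) := by
  letI : NormedAlgebra ℚ (X →L[ℝ] X) := NormedAlgebra.restrictScalars ℚ ℝ (X →L[ℝ] X)
  set w : ℝ → X := fun s => ContinuousLinearMap.adjoint C (χ s) with hw_def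
  set L : X →L[ℝ] X := A - κ • ((ContinuousLinearMap.adjoint C).comp C) with hL_def
  have hμfin : IsFiniteMeasure (volume.restrict (Ioc 0 T)) :=
    ⟨by rw [Measure.restrict_apply_univ]; exact measure_Ioc_lt_top⟩
  -- inner product facts
  have hAinner : ∀ x : X, ⟪A x, x⟫ = (0:ℝ) := by
    intro x
    have h := ContinuousLinearMap.adjoint_inner_left A x x
    rw [hA] at h
    simp only [ContinuousLinearMap.neg_apply, inner_neg_left] at h
    have h2 := real_inner_comm x (A x)
    linarith
  have hnegAinner : ∀ x : X, ⟪(-A) x, x⟫ ≤ (0:ℝ) := by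
    intro x
    simp [hAinner x]
  have hCadj_norm : ‖ContinuousLinearMap.adjoint C‖ = ‖C‖ :=
    LinearIsometryEquiv.norm_map ContinuousLinearMap.adjoint C
  have hLinner : ∀ x : X, ⟪L x, x⟫ ≤ (0:ℝ) := by
    intro x
    have hC : ⟪(ContinuousLinearMap.adjoint C) (C x), x⟫ = (‖C x‖:ℝ)^2 := by
      rw [ContinuousLinearMap.adjoint_inner_left]
      exact real_inner_self_eq_norm_sq _
    have : ⟪L x, x⟫ = ⟪A x, x⟫ - κ * ⟪(ContinuousLinearMap.adjoint C) (C x), x⟫ := by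
      simp [hL_def, inner_sub_left, inner_smul_left, ContinuousLinearMap.sub_apply,
        ContinuousLinearMap.smul_apply, ContinuousLinearMap.comp_apply]
    rw [this, hAinner x, hC]
    nlinarith [sq_nonneg ‖C x‖]
  have hA1 : ∀ r : ℝ, ‖exp (r • A)‖ ≤ 1 := by
    intro r
    rcases le_or_gt 0 r with h | h
    · exact aux_exp_contraction A (fun x => le_of_eq (hAinner x)) h
    · have hr : r • A = (-r) • (-A) := by simp
      rw [hr]
      exact aux_exp_contraction (-A) hnegAinner (by linarith)
  have hL1 : ∀ r : ℝ, 0 ≤ r → ‖exp (r • L)‖ ≤ 1 := fun r hr =>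
    aux_exp_contraction L hLinner hr
  have hLA : ‖L - A‖ ≤ κ * ‖C‖^2 := by
    rw [hL_def, sub_sub_cancel_left, norm_neg, norm_smul κ ((ContinuousLinearMap.adjoint C).comp C), Real.norm_of_nonneg hκ.le]
    have h := ContinuousLinearMap.norm_adjoint_comp_self C
    rw [h]
    nlinarith [hκ.le]
  -- measurability / integrability
  have hwmeas : AEStronglyMeasurable w (volume.restrict (Ioc 0 T)) :=
    (ContinuousLinearMap.adjoint C).continuous.comp_aestronglyMeasurable hχ.1
  have hχnorm_int : Integrable (fun s => ‖χ s‖) (volume.restrict (Ioc 0 T)) :=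
    (hχ.integrable one_le_two).norm
  have key_int : ∀ F : ℝ → (X →L[ℝ] X), Continuous F → (∀ s ∈ Ioc (0:ℝ) T, ‖F s‖ ≤ 1) →
      IntervalIntegrable (fun s => F s (w s)) volume 0 T := by
    intro F hF hFb
    rw [intervalIntegrable_iff, uIoc_of_le hT.le]
    have hmeas : AEStronglyMeasurable (fun s => F s (w s)) (volume.restrict (Ioc 0 T)) :=
      isBoundedBilinearMap_apply.continuous.comp_aestronglyMeasurable
        (hF.aestronglyMeasurable.prodMk hwmeas)
    refine (hχnorm_int.const_mul ‖C‖).mono' hmeas ?_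
    rw [ae_restrict_iff' measurableSet_Ioc]
    refine ae_of_all _ (fun s hs => ?_)
    calc ‖F s (w s)‖ ≤ ‖F s‖ * ‖w s‖ := le_opNorm _ _
      _ ≤ 1 * (‖C‖ * ‖χ s‖) := by
          refine mul_le_mul (hFb s hs) ?_ (norm_nonneg _) zero_le_one
          calc ‖w s‖ ≤ ‖ContinuousLinearMap.adjoint C‖ * ‖χ s‖ := le_opNorm _ _
            _ = ‖C‖ * ‖χ s‖ := by rw [hCadj_norm]
      _ = ‖C‖ * ‖χ s‖ := one_mul _
  -- the orthogonality gives a vanishing integral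
  have hperp' : ∫ s in (0:ℝ)..T, exp ((-s) • A) (w s) = 0 := by
    have hrw : ∀ s : ℝ, s • ContinuousLinearMap.adjoint A = (-s) • A := by
      intro s; rw [hA, smul_neg, ← neg_smul]
    simpa only [hrw] using hperp
  have hintA' : IntervalIntegrable (fun s => exp ((-s) • A) (w s)) volume 0 T :=
    key_int _ (exp_continuous.comp ((continuous_id.neg).smul continuous_const))
      (fun s _ => hA1 _)
  have hzero : ∫ s in (0:ℝ)..T, exp ((T - s) • A) (w s) = 0 := by
    have hsplit : ∀ s : ℝ,
        exp ((T - s) • A) (w s) = (exp (T • A)) (exp ((-s) • A) (w s)) := by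
      intro s
      have hcomm : Commute (T • A) ((-s) • A) := ((Commute.refl A).smul_left T).smul_right (-s)
      have heq : (T - s) • A = T • A + (-s) • A := by rw [← add_smul]; ring_nf
      rw [heq, exp_add_of_commute hcomm, ContinuousLinearMap.mul_apply]
    simp only [hsplit]
    rw [(exp (T • A)).intervalIntegral_comp_comm hintA', hperp', map_zero]
  -- integrability of main integrands
  have hintL : IntervalIntegrable (fun s => exp ((T - s) • L) (w s)) volume 0 T :=
    key_int _ (exp_continuous.comp ((continuous_const.sub continuous_id).smul continuous_const))
      (fun s hs => hL1 _ (by linarith [hs.2]))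
  have hintA2 : IntervalIntegrable (fun s => exp ((T - s) • A) (w s)) volume 0 T :=
    key_int _ (exp_continuous.comp ((continuous_const.sub continuous_id).smul continuous_const))
      (fun s _ => hA1 _)
  have hswap : ∫ s in (0:ℝ)..T, (exp ((T - s) • L) - exp ((T - s) • A)) (w s)
      = ∫ s in (0:ℝ)..T, exp ((T - s) • L) (w s) := by
    simp only [ContinuousLinearMap.sub_apply]
    rw [intervalIntegral.integral_sub hintL hintA2, hzero, sub_zero]
  have hεT : ε T = -(κ • ∫ s in (0:ℝ)..T,
      (exp ((T - s) • L) - exp ((T - s) • A)) (w s)) := by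
    rw [hε T, hswap]
  -- pointwise bound
  have hbound : ∀ s ∈ Icc (0:ℝ) T, ‖(exp ((T - s) • L) - exp ((T - s) • A)) (w s)‖
      ≤ (κ * ‖C‖^3) * ((T - s) * ‖χ s‖) := by
    intro s hs
    have hts : (0:ℝ) ≤ T - s := by linarith [hs.2]
    calc ‖(exp ((T - s) • L) - exp ((T - s) • A)) (w s)‖
        ≤ ‖exp ((T - s) • L) - exp ((T - s) • A)‖ * ‖w s‖ := le_opNorm _ _
      _ ≤ (κ * ‖C‖^2 * (T - s)) * (‖C‖ * ‖χ s‖) := by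
          refine mul_le_mul ?_ ?_ (norm_nonneg _) (by positivity)
          · exact le_trans (aux_duhamel A L hA1 hL1 hts)
              (mul_le_mul_of_nonneg_right hLA hts)
          · calc ‖w s‖ ≤ ‖ContinuousLinearMap.adjoint C‖ * ‖χ s‖ := le_opNorm _ _
              _ = ‖C‖ * ‖χ s‖ := by rw [hCadj_norm]
      _ = (κ * ‖C‖^3) * ((T - s) * ‖χ s‖) := by ring
  -- integrability of rhs bound
  have hm_int : IntervalIntegrable (fun s => (κ * ‖C‖^3) * ((T - s) * ‖χ s‖)) volume 0 T := by
    rw [intervalIntegrable_iff, uIoc_of_le hT.le]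
    have hmeas : AEStronglyMeasurable (fun s => (κ * ‖C‖^3) * ((T - s) * ‖χ s‖))
        (volume.restrict (Ioc 0 T)) :=
      (aestronglyMeasurable_const.mul
        (((continuous_const.sub continuous_id).aestronglyMeasurable).mul hχ.1.norm))
    refine ((hχnorm_int.const_mul ((κ * ‖C‖^3) * T)).mono' hmeas ?_)
    rw [ae_restrict_iff' measurableSet_Ioc]
    refine ae_of_all _ (fun s hs => ?_)
    have h1 : |T - s| ≤ T := by rw [abs_of_nonneg (by linarith [hs.2])]; linarith [hs.1]
    have h2 : |(T - s) * ‖χ s‖| ≤ T * ‖χ s‖ := by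
      rw [abs_mul, abs_of_nonneg (norm_nonneg _)]
      exact mul_le_mul_of_nonneg_right h1 (norm_nonneg _)
    calc ‖κ * ‖C‖^3 * ((T - s) * ‖χ s‖)‖
        = κ * ‖C‖^3 * |(T - s) * ‖χ s‖| := by
          rw [Real.norm_eq_abs, abs_mul, abs_of_nonneg (by positivity : (0:ℝ) ≤ κ * ‖C‖^3)]
      _ ≤ κ * ‖C‖^3 * (T * ‖χ s‖) := mul_le_mul_of_nonneg_left h2 (by positivity)
      _ = κ * ‖C‖^3 * T * ‖χ s‖ := by ring
  -- first chain
  have h1 : ‖ε T‖ ≤ κ * ∫ s in (0:ℝ)..T,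
      ‖(exp ((T - s) • L) - exp ((T - s) • A)) (w s)‖ := by
    rw [hεT, norm_neg, norm_smul, Real.norm_of_nonneg hκ.le]
    exact mul_le_mul_of_nonneg_left
      (intervalIntegral.norm_integral_le_integral_norm hT.le) hκ.le
  have h2 : ∫ s in (0:ℝ)..T, ‖(exp ((T - s) • L) - exp ((T - s) • A)) (w s)‖
      ≤ (κ * ‖C‖^3) * ∫ s in (0:ℝ)..T, (T - s) * ‖χ s‖ := by
    rw [← intervalIntegral.integral_const_mul]
    exact intervalIntegral.integral_mono_on hT.le (hintL.sub hintA2).norm hm_int hbound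
  -- Hölder step
  have hQnn : (0:ℝ) ≤ ∫ s in (0:ℝ)..T, ‖χ s‖^2 := by
    rw [intervalIntegral.integral_of_le hT.le]
    exact setIntegral_nonneg measurableSet_Ioc (fun s _ => sq_nonneg _)
  have hpow2 : ∀ x : ℝ, x ^ (2:ℝ) = x ^ 2 := fun x => by
    rw [show (2:ℝ) = ((2:ℕ):ℝ) by norm_num, Real.rpow_natCast]
  have hI : ∫ s in (0:ℝ)..T, (T - s) * ‖χ s‖
      ≤ Real.sqrt (T^3/3) * Real.sqrt (∫ s in (0:ℝ)..T, ‖χ s‖^2) := by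
    rw [intervalIntegral.integral_of_le hT.le]
    have hconj : Real.HolderConjugate 2 2 := Real.HolderConjugate.two_two
    have hf2 : MemLp (fun s : ℝ => T - s) (ENNReal.ofReal 2) (volume.restrict (Ioc 0 T)) := by
      rw [show ENNReal.ofReal 2 = 2 by simp]
      refine MemLp.mono_exponent
        (memLp_top_of_bound ((continuous_const.sub continuous_id).aestronglyMeasurable) T ?_)
        le_top
      rw [ae_restrict_iff' measurableSet_Ioc]
      refine ae_of_all _ (fun s hs => ?_)
      rw [Real.norm_eq_abs, abs_of_nonneg (by linarith [hs.2])]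
      linarith [hs.1]
    have hg2 : MemLp (fun s => ‖χ s‖) (ENNReal.ofReal 2) (volume.restrict (Ioc 0 T)) := by
      rw [show ENNReal.ofReal 2 = 2 by simp]
      exact hχ.norm
    have hfnn : 0 ≤ᵐ[volume.restrict (Ioc 0 T)] (fun s : ℝ => T - s) := by
      filter_upwards [ae_restrict_mem measurableSet_Ioc] with s hs
      simp only [Pi.zero_apply]
      linarith [hs.2]
    have hgnn : 0 ≤ᵐ[volume.restrict (Ioc 0 T)] (fun s => ‖χ s‖) :=
      ae_of_all _ (fun s => norm_nonneg _)
    have hH := integral_mul_le_Lp_mul_Lq_of_nonneg hconj hfnn hgnn hf2 hg2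
    have hTs2 : ∫ s in Ioc (0:ℝ) T, (T - s) ^ (2:ℝ) ∂volume = T^3/3 := by
      simp only [hpow2]
      rw [← intervalIntegral.integral_of_le hT.le,
        intervalIntegral.integral_comp_sub_left (fun u => u^2) T]
      simp [integral_pow]
      ring
    have hχs2 : ∫ s in Ioc (0:ℝ) T, ‖χ s‖ ^ (2:ℝ) ∂volume
        = ∫ s in (0:ℝ)..T, ‖χ s‖^2 := by
      simp only [hpow2]
      rw [intervalIntegral.integral_of_le hT.le]
    rw [hTs2, hχs2] at hH
    calc ∫ s in Ioc (0:ℝ) T, (T - s) * ‖χ s‖ ∂volume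
        ≤ (T^3/3) ^ (1/(2:ℝ)) * (∫ s in (0:ℝ)..T, ‖χ s‖^2) ^ (1/(2:ℝ)) := hH
      _ = Real.sqrt (T^3/3) * Real.sqrt (∫ s in (0:ℝ)..T, ‖χ s‖^2) := by
          rw [← Real.sqrt_eq_rpow, ← Real.sqrt_eq_rpow]
  have hsq : Real.sqrt (T^3/3) ≤ (2/3) * T ^ ((3:ℝ)/2) := by
    rw [show T^3/3 = (1/3) * T^3 by ring, Real.sqrt_mul (by norm_num) _]
    have h1 : Real.sqrt (T^3) = T ^ ((3:ℝ)/2) := by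
      rw [Real.sqrt_eq_rpow, ← Real.rpow_natCast T 3, ← Real.rpow_mul hT.le]
      norm_num
    rw [h1]
    have h2 : Real.sqrt (1/3) ≤ 2/3 := by
      rw [show (2/3:ℝ) = Real.sqrt ((2/3)^2) from (Real.sqrt_sq (by norm_num)).symm]
      apply Real.sqrt_le_sqrt
      norm_num
    exact mul_le_mul_of_nonneg_right h2 (Real.rpow_nonneg hT.le _)
  -- combine
  have hInn : (0:ℝ) ≤ ∫ s in (0:ℝ)..T, (T - s) * ‖χ s‖ := by
    rw [intervalIntegral.integral_of_le hT.le]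
    refine setIntegral_nonneg measurableSet_Ioc (fun s hs => ?_)
    have : (0:ℝ) ≤ T - s := by linarith [hs.2]
    positivity
  have hsqrtQ : (0:ℝ) ≤ Real.sqrt (∫ s in (0:ℝ)..T, ‖χ s‖^2) := Real.sqrt_nonneg _
  calc ‖ε T‖ ≤ κ * ∫ s in (0:ℝ)..T,
        ‖(exp ((T - s) • L) - exp ((T - s) • A)) (w s)‖ := h1
    _ ≤ κ * ((κ * ‖C‖^3) * ∫ s in (0:ℝ)..T, (T - s) * ‖χ s‖) :=
        mul_le_mul_of_nonneg_left h2 hκ.le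
    _ ≤ κ * ((κ * ‖C‖^3) * (Real.sqrt (T^3/3) * Real.sqrt (∫ s in (0:ℝ)..T, ‖χ s‖^2))) := by
        refine mul_le_mul_of_nonneg_left (mul_le_mul_of_nonneg_left hI ?_) hκ.le
        positivity
    _ ≤ κ * ((κ * ‖C‖^3) * (((2/3) * T ^ ((3:ℝ)/2)) * Real.sqrt (∫ s in (0:ℝ)..T, ‖χ s‖^2))) := by
        refine mul_le_mul_of_nonneg_left (mul_le_mul_of_nonneg_left
          (mul_le_mul_of_nonneg_right hsq hsqrtQ) ?_) hκ.le
        positivity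
    _ = (2 / 3) * κ ^ 2 * ‖C‖ ^ 3 * T ^ ((3:ℝ) / 2) *
        Real.sqrt (∫ s in (0:ℝ)..T, ‖χ s‖ ^ 2) := by ring
end

section
/- Let X be a real Hilbert space and A : X → X a bounded linear operator with A + A* = −Q for a bounded operator Q. Then for every t ≥ 0, e^{tA} ∘ e^{tA*} = I − ∫₀ᵗ e^{sA} ∘ Q ∘ e^{sA*} ds, where the integral is a Bochner integral in the space of bounded operators on X. -/
open NormedSpace ContinuousLinearMap intervalIntegral

/-- If `A + A* = -Q`, then `e^{tA} e^{tA*} = I − ∫₀ᵗ e^{sA} Q e^{sA*} ds` for `t ≥ 0`. -/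
theorem exp_mul_exp_adjoint_eq_one_sub_integral
    {X : Type*} [NormedAddCommGroup X] [InnerProductSpace ℝ X] [CompleteSpace X]
    (A Q : X →L[ℝ] X)
    (hAQ : A + ContinuousLinearMap.adjoint A = -Q) :
    ∀ t : ℝ, 0 ≤ t →
      (NormedSpace.exp (t • A)).comp (NormedSpace.exp (t • ContinuousLinearMap.adjoint A)) =
        1 - ∫ s in (0:ℝ)..t,
          ((NormedSpace.exp (s • A)).comp Q).comp (NormedSpace.exp (s • ContinuousLinearMap.adjoint A)) := by
  intro t ht
  set A' := ContinuousLinearMap.adjoint A with hA'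
  have key : ∀ s : ℝ, HasDerivAt (fun u : ℝ => NormedSpace.exp (u • A) * NormedSpace.exp (u • A'))
      (-(NormedSpace.exp (s • A) * Q * NormedSpace.exp (s • A'))) s := by
    intro s
    have h1 := hasDerivAt_exp_smul_const A s
    have h2 := hasDerivAt_exp_smul_const' A' s
    have h := h1.mul h2
    refine h.congr_deriv ?_; symm
    have : NormedSpace.exp (s • A) * A * NormedSpace.exp (s • A') + NormedSpace.exp (s • A) * (A' * NormedSpace.exp (s • A'))
        = NormedSpace.exp (s • A) * (A + A') * NormedSpace.exp (s • A') := by noncomm_ring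
    rw [this, hAQ]
    noncomm_ring
  have hcont : Continuous fun s : ℝ => NormedSpace.exp (s • A) * Q * NormedSpace.exp (s • A') := by
    have e1 : Continuous fun s : ℝ => NormedSpace.exp (s • A) :=
      (@NormedSpace.exp_continuous _ _ (NormedAlgebra.restrictScalars ℚ ℝ _) _).comp (continuous_id.smul continuous_const)
    have e2 : Continuous fun s : ℝ => NormedSpace.exp (s • A') :=
      (@NormedSpace.exp_continuous _ _ (NormedAlgebra.restrictScalars ℚ ℝ _) _).comp (continuous_id.smul continuous_const)
    exact (e1.mul continuous_const).mul e2
  have hFTC := intervalIntegral.integral_eq_sub_of_hasDerivAt (f := fun u : ℝ =>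
      NormedSpace.exp (u • A) * NormedSpace.exp (u • A'))
      (fun s _ => key s) (hcont.neg.intervalIntegrable 0 t)
  simp only [zero_smul, NormedSpace.exp_zero, mul_one, intervalIntegral.integral_neg] at hFTC
  have hmul : ∀ s : ℝ, ((NormedSpace.exp (s • A)).comp Q).comp (NormedSpace.exp (s • A'))
      = NormedSpace.exp (s • A) * Q * NormedSpace.exp (s • A') := fun s => rfl
  have hcomp : (NormedSpace.exp (t • A)).comp (NormedSpace.exp (t • A')) = NormedSpace.exp (t • A) * NormedSpace.exp (t • A') := rfl
  rw [hcomp]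
  simp only [hmul]
  have h2 : (∫ s in (0:ℝ)..t, NormedSpace.exp (s • A) * Q * NormedSpace.exp (s • A'))
      = 1 - NormedSpace.exp (t • A) * NormedSpace.exp (t • A') := by
    have := congrArg Neg.neg hFTC
    simpa [neg_sub] using this
  rw [h2]; abel
end

section
/- Let X be a real Hilbert space and A : X → X a bounded linear operator with A + A* = −Q where Q is a bounded positive semidefinite self-adjoint operator. Then for every t ≥ 0 the self-adjoint operator e^{tA} e^{tA*} satisfies e^{−‖Q‖t} I ≤ e^{tA} e^{tA*} ≤ I, i.e. both I − e^{tA} e^{tA*} and e^{tA} e^{tA*} − e^{−‖Q‖t} I are positive operators (⟨(I − e^{tA}e^{tA*})x, x⟩ ≥ 0 and ⟨(e^{tA}e^{tA*} − e^{−‖Q‖t}I)x, x⟩ ≥ 0 for all x ∈ X). -/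
open NormedSpace ContinuousLinearMap RealInnerProductSpace

/-- If `A + A* = -Q` with `Q ≥ 0`, then `e^{-‖Q‖t} I ≤ e^{tA} e^{tA*} ≤ I` for every
`t ≥ 0`, in the sense that both differences are positive operators. -/
theorem exp_mul_exp_adjoint_operator_bounds
    {X : Type*} [NormedAddCommGroup X] [InnerProductSpace ℝ X] [CompleteSpace X]
    (A Q : X →L[ℝ] X)
    (hAQ : A + ContinuousLinearMap.adjoint A = -Q)
    (hQsa : ContinuousLinearMap.adjoint Q = Q)
    (hQpos : ∀ x : X, 0 ≤ ⟪Q x, x⟫) :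
    ∀ t : ℝ, 0 ≤ t → ∀ x : X,
      (0 ≤ ⟪((1 : X →L[ℝ] X) -
          (exp (t • A)).comp (exp (t • ContinuousLinearMap.adjoint A))) x, x⟫) ∧
      (0 ≤ ⟪((exp (t • A)).comp (exp (t • ContinuousLinearMap.adjoint A)) -
          Real.exp (-‖Q‖ * t) • (1 : X →L[ℝ] X)) x, x⟫) := by
  intro t ht x
  set B := ContinuousLinearMap.adjoint A with hB
  set y : ℝ → X := fun s => exp (s • B) x with hy
  -- derivative of y
  have hyd : ∀ s : ℝ, HasDerivAt y (B (y s)) s := by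
    intro s
    have h1 : HasDerivAt (fun u : ℝ => exp (u • B)) (B * exp (s • B)) s :=
      hasDerivAt_exp_smul_const' B s
    have h2 := h1.clm_apply (hasDerivAt_const s x)
    simpa [hy] using h2
  set g : ℝ → ℝ := fun s => ⟪y s, y s⟫ with hg
  have hgd : ∀ s : ℝ, HasDerivAt g (-⟪Q (y s), y s⟫) s := by
    intro s
    have h := HasDerivAt.inner ℝ (hyd s) (hyd s)
    have key : ⟪y s, B (y s)⟫ + ⟪B (y s), y s⟫ = -⟪Q (y s), y s⟫ := by
      have h1 : ⟪y s, B (y s)⟫ = ⟪A (y s), y s⟫ :=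
        ContinuousLinearMap.adjoint_inner_right A (y s) (y s)
      have h2 : ⟪A (y s), y s⟫ + ⟪B (y s), y s⟫ = ⟪(A + B) (y s), y s⟫ := by
        simp [inner_add_left]
      rw [h1, h2, hAQ]
      simp [inner_neg_left]
    rw [key] at h
    exact h
  have hgdiff : Differentiable ℝ g := fun s => (hgd s).differentiableAt
  have hgderiv : ∀ s, deriv g s = -⟪Q (y s), y s⟫ := fun s => (hgd s).deriv
  have hgnn : ∀ s, 0 ≤ g s := fun s => real_inner_self_nonneg
  have hg0 : g 0 = ⟪x, x⟫ := by simp [hg, hy]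
  -- Q bound : ⟪Q y, y⟫ ≤ ‖Q‖ * g s
  have hQbound : ∀ s : ℝ, ⟪Q (y s), y s⟫ ≤ ‖Q‖ * g s := by
    intro s
    calc ⟪Q (y s), y s⟫ ≤ ‖Q (y s)‖ * ‖y s‖ := real_inner_le_norm _ _
      _ ≤ (‖Q‖ * ‖y s‖) * ‖y s‖ :=
        mul_le_mul_of_nonneg_right (Q.le_opNorm (y s)) (norm_nonneg _)
      _ = ‖Q‖ * g s := by
        rw [mul_assoc, hg]
        congr 1
        exact (real_inner_self_eq_norm_mul_norm (y s)).symm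
  -- g is antitone
  have hganti : Antitone g := by
    apply antitone_of_deriv_nonpos hgdiff
    intro s
    rw [hgderiv s]
    simpa using hQpos (y s)
  -- gronwall: h = exp(‖Q‖ s) * g s is monotone
  have hmono : Monotone (fun s : ℝ => Real.exp (‖Q‖ * s) * g s) := by
    have hd : ∀ s : ℝ, HasDerivAt (fun s : ℝ => Real.exp (‖Q‖ * s) * g s)
        (‖Q‖ * Real.exp (‖Q‖ * s) * g s + Real.exp (‖Q‖ * s) * (-⟪Q (y s), y s⟫)) s := by
      intro s
      have he : HasDerivAt (fun s : ℝ => Real.exp (‖Q‖ * s)) (‖Q‖ * Real.exp (‖Q‖ * s)) s := by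
        have := (Real.hasDerivAt_exp (‖Q‖ * s)).comp s
          ((hasDerivAt_id s).const_mul ‖Q‖)
        simpa [Function.comp_def, mul_comm] using this
      exact he.mul (hgd s)
    apply monotone_of_deriv_nonneg (fun s => (hd s).differentiableAt)
    intro s
    rw [(hd s).deriv]
    have := hQbound s
    have hexp : 0 < Real.exp (‖Q‖ * s) := Real.exp_pos _
    nlinarith [hexp, hQbound s]
  -- identify ⟪E x, x⟫ with g t
  have hadj : ContinuousLinearMap.adjoint (exp (t • A)) = exp (t • B) := by
    rw [← ContinuousLinearMap.star_eq_adjoint, star_exp]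
    congr 1
    rw [star_smul, star_trivial, ContinuousLinearMap.star_eq_adjoint, hB]
  have hEx : ⟪((exp (t • A)).comp (exp (t • B))) x, x⟫ = g t := by
    rw [ContinuousLinearMap.comp_apply, ← ContinuousLinearMap.adjoint_inner_right, hadj]
  constructor
  · have h1 : g t ≤ g 0 := hganti ht
    rw [hg0] at h1
    simp only [ContinuousLinearMap.sub_apply, inner_sub_left, ContinuousLinearMap.one_apply]
    rw [hEx]
    linarith
  · have h2 : Real.exp (‖Q‖ * 0) * g 0 ≤ Real.exp (‖Q‖ * t) * g t := hmono ht
    rw [hg0] at h2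
    simp only [mul_zero, Real.exp_zero, one_mul] at h2
    have hgt : Real.exp (-‖Q‖ * t) * ⟪x, x⟫ ≤ g t := by
      have hexp : 0 < Real.exp (‖Q‖ * t) := Real.exp_pos _
      rw [neg_mul, Real.exp_neg, inv_mul_le_iff₀ hexp]
      linarith
    simp only [ContinuousLinearMap.sub_apply, inner_sub_left, ContinuousLinearMap.smul_apply,
      ContinuousLinearMap.one_apply, inner_smul_left, RCLike.star_def, conj_trivial]
    rw [hEx]
    linarith
end

section
/- Let X be a real Hilbert space and A : X → X a bounded linear operator with A + A* = −Q where Q is a bounded positive semidefinite self-adjoint operator. Then for every t ≥ 0, ‖e^{tA} e^{tA*} − e^{−‖Q/2‖t} I‖ ≤ 1 − e^{−‖Q/2‖t}, where ‖Q/2‖ = ‖Q‖/2. -/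
open NormedSpace ContinuousLinearMap RealInnerProductSpace

/-- Norm bound for symmetric operators via the diagonal of the quadratic form. -/
lemma sym_opNorm_le {X : Type*} [NormedAddCommGroup X] [InnerProductSpace ℝ X]
    {T : X →L[ℝ] X} (hT : ∀ x y : X, ⟪T x, y⟫ = ⟪x, T y⟫) {C : ℝ} (hC : 0 ≤ C)
    (h : ∀ x : X, |⟪T x, x⟫| ≤ C * ‖x‖ ^ 2) : ‖T‖ ≤ C := by
  apply ContinuousLinearMap.opNorm_le_bound T hC
  have key : ∀ x y : X, ⟪T x, y⟫ ≤ C / 2 * (‖x‖ ^ 2 + ‖y‖ ^ 2) := by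
    intro x y
    have h4 : 4 * ⟪T x, y⟫ = ⟪T (x + y), x + y⟫ - ⟪T (x - y), x - y⟫ := by
      have hyx : ⟪T y, x⟫ = ⟪T x, y⟫ := by
        exact (real_inner_comm x (T y)).trans (hT x y).symm
      simp only [map_add, map_sub, inner_add_left, inner_add_right, inner_sub_left,
        inner_sub_right]
      linarith
    have b1 := (abs_le.mp (h (x + y))).2
    have b2 := (abs_le.mp (h (x - y))).1
    have par : ‖x + y‖ ^ 2 + ‖x - y‖ ^ 2 = 2 * (‖x‖ ^ 2 + ‖y‖ ^ 2) := by
      have e1 := @norm_add_sq_real X _ _ x y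
      have e2 := @norm_sub_sq_real X _ _ x y
      linarith
    nlinarith [sq_nonneg ‖x + y‖, sq_nonneg ‖x - y‖]
  intro x
  by_cases hTx : T x = 0
  · simp [hTx]; positivity
  have hx : x ≠ 0 := by rintro rfl; simp at hTx
  have hxn : 0 < ‖x‖ := norm_pos_iff.mpr hx
  have hTxn : 0 < ‖T x‖ := norm_pos_iff.mpr hTx
  set a : ℝ := Real.sqrt (‖T x‖ / ‖x‖) with ha
  have ha0 : 0 < a := Real.sqrt_pos.mpr (by positivity)
  have ha2 : a ^ 2 = ‖T x‖ / ‖x‖ := Real.sq_sqrt (by positivity)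
  have hk := key (a • x) (a⁻¹ • T x)
  rw [map_smul, inner_smul_left, inner_smul_right] at hk
  have hinner : ⟪T x, T x⟫ = ‖T x‖ ^ 2 := real_inner_self_eq_norm_sq (T x)
  rw [norm_smul, norm_smul] at hk
  simp only [RCLike.star_def, conj_trivial, Real.norm_eq_abs, abs_of_pos ha0,
    abs_of_pos (inv_pos.mpr ha0)] at hk
  rw [hinner] at hk
  have hainv : a * a⁻¹ = 1 := mul_inv_cancel₀ (ne_of_gt ha0)
  have hkey : ‖T x‖ ^ 2 ≤ C / 2 * (a ^ 2 * ‖x‖ ^ 2 + a⁻¹ ^ 2 * ‖T x‖ ^ 2) := by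
    nlinarith
  have hai2 : a⁻¹ ^ 2 = ‖x‖ / ‖T x‖ := by
    rw [inv_pow, ha2]; field_simp
  rw [ha2, hai2] at hkey
  have : ‖T x‖ ^ 2 ≤ C * (‖T x‖ * ‖x‖) := by
    have e1 : ‖T x‖ / ‖x‖ * ‖x‖ ^ 2 = ‖T x‖ * ‖x‖ := by field_simp
    have e2 : ‖x‖ / ‖T x‖ * ‖T x‖ ^ 2 = ‖x‖ * ‖T x‖ := by field_simp
    rw [e1, e2] at hkey; nlinarith
  nlinarith


/-- If `A + A* = -Q` with `Q ≥ 0`, then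
`‖e^{tA} e^{tA*} − e^{−‖Q/2‖t} I‖ ≤ 1 − e^{−‖Q/2‖t}` for every `t ≥ 0`. -/
theorem exp_mul_exp_adjoint_scalar_approx
    {X : Type*} [NormedAddCommGroup X] [InnerProductSpace ℝ X] [CompleteSpace X]
    (A Q : X →L[ℝ] X)
    (hAQ : A + ContinuousLinearMap.adjoint A = -Q)
    (hQsa : ContinuousLinearMap.adjoint Q = Q)
    (hQpos : ∀ x : X, 0 ≤ ⟪Q x, x⟫) :
    ∀ t : ℝ, 0 ≤ t →
      ‖(exp (t • A)).comp (exp (t • ContinuousLinearMap.adjoint A)) -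
          Real.exp (-(‖Q‖ / 2) * t) • (1 : X →L[ℝ] X)‖
        ≤ 1 - Real.exp (-(‖Q‖ / 2) * t) := by
  intro t ht
  set B := ContinuousLinearMap.adjoint A with hB
  set K := ‖Q‖ with hK
  have hK0 : 0 ≤ K := norm_nonneg Q
  set c : ℝ := Real.exp (-(K / 2) * t) with hc
  have hc0 : 0 < c := Real.exp_pos _
  have hc1 : c ≤ 1 := Real.exp_le_one_iff.mpr (by nlinarith)
  -- adjoint of exponential
  have hstar : ContinuousLinearMap.adjoint (exp (t • A)) = exp (t • B) := by
    rw [← ContinuousLinearMap.star_eq_adjoint, star_exp, star_smul, star_trivial,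
      ContinuousLinearMap.star_eq_adjoint, ← hB]
  -- derivative of u
  have hu : ∀ (x : X) (τ : ℝ),
      HasDerivAt (fun s : ℝ => exp (s • B) x) (B (exp (τ • B) x)) τ := by
    intro x τ
    have h1 := hasDerivAt_exp_smul_const' (𝕂 := ℝ) B τ
    have h2 := h1.clm_apply (hasDerivAt_const τ x)
    simpa using h2
  -- derivative of f
  have hf : ∀ (x : X) (τ : ℝ),
      HasDerivAt (fun s : ℝ => ⟪exp (s • B) x, exp (s • B) x⟫)
        (-⟪Q (exp (τ • B) x), exp (τ • B) x⟫) τ := by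
    intro x τ
    have h1 := (hu x τ).inner ℝ (hu x τ)
    refine h1.congr_deriv ?_
    set v := exp (τ • B) x with hv
    have e1 : ⟪v, B v⟫ = ⟪A v, v⟫ := ContinuousLinearMap.adjoint_inner_right A v v
    have e2 : ⟪B v, v⟫ = ⟪v, A v⟫ := ContinuousLinearMap.adjoint_inner_left A v v
    have e3 : ⟪A v, v⟫ = ⟪v, A v⟫ := real_inner_comm v (A v)
    have e4 := congrArg (fun (T : X →L[ℝ] X) => ⟪T v, v⟫) hAQ
    simp only [ContinuousLinearMap.add_apply, ContinuousLinearMap.neg_apply,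
      inner_add_left, inner_neg_left] at e4
    linarith [e1, e2, e3, e4]
  have hu0 : ∀ x : X, exp ((0 : ℝ) • B) x = x := by
    intro x; rw [zero_smul, exp_zero]; rfl
  -- pointwise quadratic form bounds
  have hbounds : ∀ x : X,
      c ^ 2 * ‖x‖ ^ 2 ≤ ⟪exp (t • B) x, exp (t • B) x⟫ ∧
      ⟪exp (t • B) x, exp (t • B) x⟫ ≤ ‖x‖ ^ 2 := by
    intro x
    set f : ℝ → ℝ := fun s => ⟪exp (s • B) x, exp (s • B) x⟫ with hfdef
    have hq : ∀ τ : ℝ, ⟪Q (exp (τ • B) x), exp (τ • B) x⟫ ≤ K * f τ := by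
      intro τ
      set v := exp (τ • B) x
      have h1 : ⟪Q v, v⟫ ≤ ‖Q v‖ * ‖v‖ := real_inner_le_norm (Q v) v
      have h2 : ‖Q v‖ ≤ K * ‖v‖ := Q.le_opNorm v
      have h3 : f τ = ‖v‖ ^ 2 := real_inner_self_eq_norm_sq v
      nlinarith [norm_nonneg v, norm_nonneg (Q v)]
    -- upper bound: f antitone
    have hanti : Antitone f := by
      apply antitone_of_deriv_nonpos
      · exact fun τ => ((hf x τ)).differentiableAt
      · intro τ
        rw [(hf x τ).deriv]
        have := hQpos (exp (τ • B) x)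
        linarith
    have hupper : f t ≤ ‖x‖ ^ 2 := by
      have := hanti ht
      rwa [show f 0 = ‖x‖ ^ 2 by
        simp only [hfdef]; rw [hu0 x]; exact real_inner_self_eq_norm_sq x] at this
    -- lower bound via F s = exp (K s) * f s monotone
    have hF : ∀ τ : ℝ, HasDerivAt (fun s => Real.exp (K * s) * f s)
        (K * Real.exp (K * τ) * f τ + Real.exp (K * τ) *
          (-⟪Q (exp (τ • B) x), exp (τ • B) x⟫)) τ := by
      intro τ
      have hexp : HasDerivAt (fun s : ℝ => Real.exp (K * s)) (K * Real.exp (K * τ)) τ := by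
        have h := ((hasDerivAt_id τ).const_mul K).exp
        convert h using 1
        all_goals simp [mul_comm]
      exact hexp.mul (hf x τ)
    have hmono : Monotone (fun s => Real.exp (K * s) * f s) := by
      apply monotone_of_deriv_nonneg
      · exact fun τ => (hF τ).differentiableAt
      · intro τ
        rw [(hF τ).deriv]
        have h1 := hq τ
        have h2 : 0 ≤ f τ := real_inner_self_nonneg
        have h3 : (0:ℝ) < Real.exp (K * τ) := Real.exp_pos _
        nlinarith
    have hlow : ‖x‖ ^ 2 ≤ Real.exp (K * t) * f t := by
      have := hmono ht
      simp only [mul_zero, Real.exp_zero, one_mul] at this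
      rwa [show f 0 = ‖x‖ ^ 2 by
        simp only [hfdef]; rw [hu0 x]; exact real_inner_self_eq_norm_sq x] at this
    have hc2 : c ^ 2 = Real.exp (-(K * t)) := by
      rw [hc, ← Real.exp_nat_mul]
      congr 1; ring
    have hlower : c ^ 2 * ‖x‖ ^ 2 ≤ f t := by
      rw [hc2]
      have he : Real.exp (-(K * t)) * Real.exp (K * t) = 1 := by
        rw [← Real.exp_add]; simp
      have h3 : (0:ℝ) < Real.exp (-(K * t)) := Real.exp_pos _
      nlinarith [hlow]
    exact ⟨hlower, hupper⟩
  -- symmetric operator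
  set S := (exp (t • A)).comp (exp (t • B)) with hS
  have hSinner : ∀ x y : X, ⟪S x, y⟫ = ⟪exp (t • B) x, exp (t • B) y⟫ := by
    intro x y
    have := ContinuousLinearMap.adjoint_inner_left (exp (t • A)) (exp (t • B) x) y
    rw [hstar] at this
    calc ⟪S x, y⟫ = ⟪exp (t • A) (exp (t • B) x), y⟫ := rfl
      _ = ⟪exp (t • B) x, exp (t • B) y⟫ := by
          rw [real_inner_comm y (exp (t • A) (exp (t • B) x)), ← this]
          exact real_inner_comm (exp (t • B) x) (exp (t • B) y)
  have hsym : ∀ x y : X, ⟪(S - c • (1 : X →L[ℝ] X)) x, y⟫ = ⟪x, (S - c • (1 : X →L[ℝ] X)) y⟫ := by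
    intro x y
    have h1 : ⟪S x, y⟫ = ⟪x, S y⟫ := by
      rw [hSinner x y, real_inner_comm (S y) x, hSinner y x]
      exact (real_inner_comm (exp (t • B) y) (exp (t • B) x))
    simp only [ContinuousLinearMap.sub_apply, ContinuousLinearMap.smul_apply,
      ContinuousLinearMap.one_apply, inner_sub_left, inner_sub_right,
      real_inner_smul_left, real_inner_smul_right, h1]
  have hdiag : ∀ x : X, |⟪(S - c • (1 : X →L[ℝ] X)) x, x⟫| ≤ (1 - c) * ‖x‖ ^ 2 := by
    intro x
    obtain ⟨hlo, hhi⟩ := hbounds x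
    have hd : ⟪(S - c • (1 : X →L[ℝ] X)) x, x⟫ =
        ⟪exp (t • B) x, exp (t • B) x⟫ - c * ‖x‖ ^ 2 := by
      simp only [ContinuousLinearMap.sub_apply, ContinuousLinearMap.smul_apply,
        ContinuousLinearMap.one_apply, inner_sub_left, real_inner_smul_left, hSinner x x]
      rw [real_inner_self_eq_norm_sq x]
    rw [hd, abs_le]
    constructor
    · nlinarith [sq_nonneg ((c - 1) * ‖x‖)]
    · nlinarith [sq_nonneg ‖x‖]
  have := sym_opNorm_le hsym (by linarith : (0:ℝ) ≤ 1 - c) hdiag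
  exact this
end

section
/- Let X and Y be real Hilbert spaces, A : X → X a bounded linear operator with A + A* = −Q where Q is a bounded positive semidefinite self-adjoint operator, and C : X → Y a bounded operator such that the system is exactly observable at time T > 0 with constant δ > 0. Let f : [0,T] → X be continuous, y ∈ L²(0,T;Y), k : [0,T] → ℝ continuous, and P(s) := e^{sA} e^{sA*}. Suppose x° ∈ X satisfies ∫₀ᵀ e^{sA*} C* ( y(s) − C z[x°](s) ) ds = 0 and x̃ ∈ X satisfies ∫₀ᵀ e^{−sA} k(s) C* ( y(s) − C z[x̃](s) ) ds = 0, where z[x](t) := e^{tA} x + ∫₀ᵗ e^{(t−s)A} f(s) ds. If ‖ e^{−sA} ( P(s) − k(s) I ) ‖ ≤ γ for all s ∈ [0,T], then ‖x° − x̃‖ ≤ (γ ‖C‖ √T / δ) ‖ y − C z[x̃] ‖_{L²(0,T;Y)}. -/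
open MeasureTheory NormedSpace ContinuousLinearMap RealInnerProductSpace Set

set_option synthInstance.maxHeartbeats 1000000
set_option maxHeartbeats 2000000

lemma aux_aesm_apply {W Z : Type*} [NormedAddCommGroup W] [NormedSpace ℝ W]
    [NormedAddCommGroup Z] [NormedSpace ℝ Z] {μ : Measure ℝ}
    {Φ : ℝ → (W →L[ℝ] Z)} {g : ℝ → W}
    (hΦ : AEStronglyMeasurable Φ μ) (hg : AEStronglyMeasurable g μ) :
    AEStronglyMeasurable (fun t => Φ t (g t)) μ :=
  isBoundedBilinearMap_apply.continuous.comp_aestronglyMeasurable (hΦ.prodMk hg)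

lemma aux_cont_apply {W Z : Type*} [NormedAddCommGroup W] [NormedSpace ℝ W]
    [NormedAddCommGroup Z] [NormedSpace ℝ Z] {s : Set ℝ}
    {Φ : ℝ → (W →L[ℝ] Z)} {g : ℝ → W} (hΦ : ContinuousOn Φ s) (hg : ContinuousOn g s) :
    ContinuousOn (fun t => Φ t (g t)) s :=
  hΦ.clm_apply hg

lemma aux_integrable_apply {W Z : Type*} [NormedAddCommGroup W] [NormedSpace ℝ W]
    [NormedAddCommGroup Z] [NormedSpace ℝ Z]
    {T : ℝ} {Φ : ℝ → (W →L[ℝ] Z)} {g : ℝ → W}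
    (hΦ : ContinuousOn Φ (Icc 0 T))
    (hg : Integrable g (volume.restrict (Ioc 0 T))) :
    Integrable (fun t => Φ t (g t)) (volume.restrict (Ioc 0 T)) := by
  obtain ⟨M, hM⟩ := isCompact_Icc.exists_bound_of_continuousOn hΦ
  have hΦm : AEStronglyMeasurable Φ (volume.restrict (Ioc 0 T)) :=
    (hΦ.mono Ioc_subset_Icc_self).aestronglyMeasurable measurableSet_Ioc
  refine (hg.norm.const_mul M).mono' (aux_aesm_apply hΦm hg.1) ?_
  filter_upwards [ae_restrict_mem measurableSet_Ioc] with s hs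
  calc ‖Φ s (g s)‖ ≤ ‖Φ s‖ * ‖g s‖ := (Φ s).le_opNorm _
    _ ≤ M * ‖g s‖ := mul_le_mul_of_nonneg_right (hM s (Ioc_subset_Icc_self hs)) (norm_nonneg _)

lemma aux_exp_adjoint {X : Type*} [NormedAddCommGroup X] [InnerProductSpace ℝ X] [CompleteSpace X]
    (A : X →L[ℝ] X) (s : ℝ) :
    exp (s • ContinuousLinearMap.adjoint A) = ContinuousLinearMap.adjoint (exp (s • A)) := by
  have h : s • ContinuousLinearMap.adjoint A = star (s • A) := by
    rw [star_smul, star_trivial, star_eq_adjoint]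
  rw [h, ← star_exp, star_eq_adjoint]

lemma aux_exp_neg_mul {X : Type*} [NormedAddCommGroup X] [InnerProductSpace ℝ X] [CompleteSpace X]
    (A : X →L[ℝ] X) (s : ℝ) : exp (s • (-A)) * exp (s • A) = 1 := by
  let +nondep : NormedAlgebra ℚ (X →L[ℝ] X) := .restrictScalars ℚ ℝ (X →L[ℝ] X)
  rw [← exp_add_of_commute, smul_neg, neg_add_cancel, exp_zero]
  rw [smul_neg]; exact (Commute.refl (s • A)).neg_left

lemma aux_exp_sub {X : Type*} [NormedAddCommGroup X] [InnerProductSpace ℝ X] [CompleteSpace X]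
    (A : X →L[ℝ] X) (t s : ℝ) : exp ((t - s) • A) = exp (t • A) * exp (s • (-A)) := by
  let +nondep : NormedAlgebra ℚ (X →L[ℝ] X) := .restrictScalars ℚ ℝ (X →L[ℝ] X)
  rw [smul_neg, ← exp_add_of_commute ((((Commute.refl A).smul_left t).smul_right s).neg_right)]
  congr 1; rw [sub_smul, sub_eq_add_neg]

/-- **(Abstract form of Theorem 4 of the paper.)** A posteriori bound on the bias between the
output-error minimizer `x°` and the limit `x̃` of the BFN method with the approximate scalar
gain modulation `k(s) ≈ P(s) = e^{sA}e^{sA*}`. -/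
theorem aposteriori_bias_bound
    {X Y : Type*} [NormedAddCommGroup X] [InnerProductSpace ℝ X] [CompleteSpace X]
    [NormedAddCommGroup Y] [InnerProductSpace ℝ Y] [CompleteSpace Y]
    (A Q : X →L[ℝ] X)
    (hAQ : A + ContinuousLinearMap.adjoint A = -Q)
    (hQsa : ContinuousLinearMap.adjoint Q = Q)
    (hQpos : ∀ x : X, 0 ≤ ⟪Q x, x⟫)
    (C : X →L[ℝ] Y) (T δ : ℝ) (hT : 0 < T) (hδ : 0 < δ)
    (hobs : ∀ x : X, δ * ‖x‖ ^ 2 ≤ ∫ s in (0:ℝ)..T, ‖C (exp (s • A) x)‖ ^ 2)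
    (f : ℝ → X) (hf : ContinuousOn f (Icc 0 T))
    (y : ℝ → Y) (hy : MemLp y 2 (volume.restrict (Ioc 0 T)))
    (k : ℝ → ℝ) (hk : ContinuousOn k (Icc 0 T))
    (xo : X)
    (hxo : ∫ s in (0:ℝ)..T, exp (s • ContinuousLinearMap.adjoint A)
        (ContinuousLinearMap.adjoint C (y s - C (mildSol A f xo s))) = 0)
    (xt : X)
    (hxt : ∫ s in (0:ℝ)..T, k s •
        exp (s • (-A)) (ContinuousLinearMap.adjoint C (y s - C (mildSol A f xt s))) = 0)
    (γ : ℝ)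
    (hγ : ∀ s ∈ Icc (0:ℝ) T,
      ‖(exp (s • (-A))).comp
          ((exp (s • A)).comp (exp (s • ContinuousLinearMap.adjoint A)) -
            k s • (1 : X →L[ℝ] X))‖ ≤ γ) :
    ‖xo - xt‖ ≤ γ * ‖C‖ * Real.sqrt T / δ *
      Real.sqrt (∫ s in (0:ℝ)..T, ‖y s - C (mildSol A f xt s)‖ ^ 2) := by
  have hT' : (0:ℝ) ≤ T := hT.le
  set μ : Measure ℝ := volume.restrict (Ioc 0 T) with hμ
  haveI : IsFiniteMeasure μ := ⟨by
    rw [hμ, Measure.restrict_apply_univ]; exact measure_Ioc_lt_top⟩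
  let +nondep : NormedAlgebra ℚ (X →L[ℝ] X) := .restrictScalars ℚ ℝ (X →L[ℝ] X)
  have hexp : ∀ B : X →L[ℝ] X, Continuous fun s : ℝ => exp (s • B) := fun B =>
    exp_continuous.comp (continuous_id.smul continuous_const)
  have γ0 : 0 ≤ γ := le_trans (norm_nonneg _) (hγ 0 ⟨le_rfl, hT'⟩)
  set d : X := xo - xt with hd
  set E : ℝ → Y := fun s => y s - C (mildSol A f xt s) with hE
  set p : ℝ → Y := fun s => C (exp (s • A) d) with hp
  -- continuity of the mild solution for xt
  have hgc : ContinuousOn (fun s : ℝ => exp (s • (-A)) (f s)) (Icc 0 T) :=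
    aux_cont_apply (hexp (-A)).continuousOn hf
  have hmild : ContinuousOn (mildSol A f xt) (Icc 0 T) := by
    have key : ∀ t ∈ Icc (0:ℝ) T, mildSol A f xt t
        = exp (t • A) xt + exp (t • A) (∫ s in (0:ℝ)..t, exp (s • (-A)) (f s)) := by
      intro t ht
      have hint : IntervalIntegrable (fun s : ℝ => exp (s • (-A)) (f s)) volume 0 t := by
        apply ContinuousOn.intervalIntegrable
        apply hgc.mono
        rw [uIcc_of_le ht.1]
        exact Icc_subset_Icc le_rfl ht.2
      unfold mildSol
      congr 1
      rw [← (exp (t • A)).intervalIntegral_comp_comm hint]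
      apply intervalIntegral.integral_congr
      intro s _
      simp only [aux_exp_sub, ContinuousLinearMap.mul_apply]
    refine ContinuousOn.congr ?_ key
    refine ContinuousOn.add (aux_cont_apply (hexp A).continuousOn continuousOn_const) ?_
    refine aux_cont_apply (hexp A).continuousOn ?_
    have := intervalIntegral.continuousOn_primitive_interval
      (f := fun s : ℝ => exp (s • (-A)) (f s)) (μ := volume) (a := (0:ℝ)) (b := T)
      (by rw [uIcc_of_le hT']; exact hgc.integrableOn_Icc)
    rwa [uIcc_of_le hT'] at this
  -- E is L² and integrable
  have hCz : ContinuousOn (fun s => C (mildSol A f xt s)) (Icc 0 T) :=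
    C.continuous.comp_continuousOn hmild
  have hE2 : MemLp E 2 μ := by
    obtain ⟨M, hM⟩ := isCompact_Icc.exists_bound_of_continuousOn hCz
    refine hy.sub (MemLp.of_bound
      ((hCz.mono Ioc_subset_Icc_self).aestronglyMeasurable measurableSet_Ioc) M ?_)
    filter_upwards [ae_restrict_mem measurableSet_Ioc] with s hs
    exact hM s (Ioc_subset_Icc_self hs)
  have hE1 : Integrable E μ :=
    memLp_one_iff_integrable.mp (hE2.mono_exponent (by norm_num))
  have hG : Integrable (fun s => ContinuousLinearMap.adjoint C (E s)) μ :=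
    (ContinuousLinearMap.adjoint C).integrable_comp hE1
  -- integrabilities of the three integrands
  have hu : Integrable
      (fun s => exp (s • ContinuousLinearMap.adjoint A)
        (ContinuousLinearMap.adjoint C (E s))) μ :=
    aux_integrable_apply (hexp _).continuousOn hG
  have hv : Integrable
      (fun s => k s • exp (s • (-A)) (ContinuousLinearMap.adjoint C (E s))) μ := by
    have : Integrable
        (fun s => (k s • exp (s • (-A))) (ContinuousLinearMap.adjoint C (E s))) μ :=
      aux_integrable_apply (hk.smul (hexp (-A)).continuousOn) hG
    simpa only [ContinuousLinearMap.smul_apply] using this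
  have hq : Integrable
      (fun s => exp (s • ContinuousLinearMap.adjoint A)
        (ContinuousLinearMap.adjoint C (p s))) μ := by
    refine aux_integrable_apply (hexp _).continuousOn ?_
    refine Integrable.mono_measure ?_ (Measure.restrict_mono Ioc_subset_Icc_self le_rfl)
    exact ((ContinuousLinearMap.adjoint C).continuous.comp_continuousOn
      (C.continuous.comp_continuousOn (aux_cont_apply (hexp A).continuousOn
        continuousOn_const))).integrableOn_Icc
  -- rewrite hxo as a μ-integral identity
  have hxo' : ∫ s, exp (s • ContinuousLinearMap.adjoint A)
        (ContinuousLinearMap.adjoint C (E s)) ∂μ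
      = ∫ s, exp (s • ContinuousLinearMap.adjoint A)
        (ContinuousLinearMap.adjoint C (p s)) ∂μ := by
    have h1 : ∀ s : ℝ, exp (s • ContinuousLinearMap.adjoint A)
        (ContinuousLinearMap.adjoint C (y s - C (mildSol A f xo s)))
        = exp (s • ContinuousLinearMap.adjoint A) (ContinuousLinearMap.adjoint C (E s))
          - exp (s • ContinuousLinearMap.adjoint A) (ContinuousLinearMap.adjoint C (p s)) := by
      intro s
      have h2 : y s - C (mildSol A f xo s) = E s - p s := by
        rw [hE, hp]
        have h3 : mildSol A f xo s = mildSol A f xt s + exp (s • A) d := by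
          unfold mildSol
          rw [hd]
          simp only [map_sub]
          abel
        rw [h3]
        simp only [map_add]
        abel
      rw [h2, map_sub, map_sub]
    rw [intervalIntegral.integral_of_le hT'] at hxo
    simp only [h1] at hxo
    rw [integral_sub hu hq] at hxo
    exact sub_eq_zero.mp hxo
  -- hxt as μ-integral
  have hxt' : ∫ s, k s • exp (s • (-A)) (ContinuousLinearMap.adjoint C (E s)) ∂μ = 0 := by
    rw [intervalIntegral.integral_of_le hT'] at hxt
    exact hxt
  -- the quadratic identity
  have hinner : ∫ s, ‖p s‖ ^ 2 ∂μ
      = ⟪d, ∫ s, exp (s • ContinuousLinearMap.adjoint A)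
          (ContinuousLinearMap.adjoint C (E s)) ∂μ⟫ := by
    rw [hxo', ← integral_inner hq d]
    refine integral_congr_ae (ae_of_all _ fun s => ?_)
    show ‖p s‖ ^ 2 = ⟪d, exp (s • ContinuousLinearMap.adjoint A)
        (ContinuousLinearMap.adjoint C (p s))⟫
    rw [aux_exp_adjoint, real_inner_comm, adjoint_inner_left, adjoint_inner_left,
      real_inner_self_eq_norm_sq]
  -- observability lower bound
  have hlow : δ * ‖d‖ ^ 2 ≤ ∫ s, ‖p s‖ ^ 2 ∂μ := by
    have h := hobs d
    rwa [intervalIntegral.integral_of_le hT'] at h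
  -- the residual bound on the integral
  have hWnorm : ‖∫ s, exp (s • ContinuousLinearMap.adjoint A)
        (ContinuousLinearMap.adjoint C (E s)) ∂μ‖
      ≤ γ * ‖C‖ * ∫ s, ‖E s‖ ∂μ := by
    set W : ℝ → (X →L[ℝ] X) := fun s =>
      (exp (s • (-A))).comp
        ((exp (s • A)).comp (exp (s • ContinuousLinearMap.adjoint A))
          - k s • (1 : X →L[ℝ] X)) with hW
    have hWcont : ContinuousOn W (Icc 0 T) := by
      have hWeq : W = fun s => exp (s • (-A)) *
          (exp (s • A) * exp (s • ContinuousLinearMap.adjoint A)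
            - k s • (1 : X →L[ℝ] X)) := rfl
      rw [hWeq]
      exact (hexp (-A)).continuousOn.mul
        (((hexp A).continuousOn.mul (hexp _).continuousOn).sub (hk.smul continuousOn_const))
    have hw : Integrable (fun s => W s (ContinuousLinearMap.adjoint C (E s))) μ :=
      aux_integrable_apply hWcont hG
    have hsplit : ∀ s : ℝ, W s (ContinuousLinearMap.adjoint C (E s))
        = exp (s • ContinuousLinearMap.adjoint A) (ContinuousLinearMap.adjoint C (E s))
          - k s • exp (s • (-A)) (ContinuousLinearMap.adjoint C (E s)) := by
      intro s
      rw [hW]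
      simp only [ContinuousLinearMap.comp_apply, ContinuousLinearMap.sub_apply,
        ContinuousLinearMap.smul_apply, ContinuousLinearMap.one_apply, map_sub, _root_.map_smul]
      congr 1
      rw [← ContinuousLinearMap.comp_apply, ← ContinuousLinearMap.mul_def, aux_exp_neg_mul,
        ContinuousLinearMap.one_apply]
    have heq : ∫ s, exp (s • ContinuousLinearMap.adjoint A)
          (ContinuousLinearMap.adjoint C (E s)) ∂μ
        = ∫ s, W s (ContinuousLinearMap.adjoint C (E s)) ∂μ := by
      have h4 : ∫ s, W s (ContinuousLinearMap.adjoint C (E s)) ∂μ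
          = (∫ s, exp (s • ContinuousLinearMap.adjoint A)
              (ContinuousLinearMap.adjoint C (E s)) ∂μ)
            - ∫ s, k s • exp (s • (-A)) (ContinuousLinearMap.adjoint C (E s)) ∂μ := by
        rw [← integral_sub hu hv]
        exact integral_congr_ae (ae_of_all _ fun s => hsplit s)
      rw [h4, hxt', sub_zero]
    rw [heq]
    calc ‖∫ s, W s (ContinuousLinearMap.adjoint C (E s)) ∂μ‖
        ≤ ∫ s, ‖W s (ContinuousLinearMap.adjoint C (E s))‖ ∂μ := norm_integral_le_integral_norm _
      _ ≤ ∫ s, γ * ‖C‖ * ‖E s‖ ∂μ := by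
          refine integral_mono_ae hw.norm (hE1.norm.const_mul _) ?_
          filter_upwards [ae_restrict_mem measurableSet_Ioc] with s hs
          calc ‖W s (ContinuousLinearMap.adjoint C (E s))‖
              ≤ ‖W s‖ * ‖ContinuousLinearMap.adjoint C (E s)‖ := (W s).le_opNorm _
            _ ≤ γ * (‖C‖ * ‖E s‖) := by
                refine mul_le_mul (hγ s (Ioc_subset_Icc_self hs)) ?_ (norm_nonneg _) γ0
                calc ‖ContinuousLinearMap.adjoint C (E s)‖
                    ≤ ‖ContinuousLinearMap.adjoint C‖ * ‖E s‖ :=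
                      (ContinuousLinearMap.adjoint C).le_opNorm _
                  _ = ‖C‖ * ‖E s‖ := by rw [LinearIsometryEquiv.norm_map adjoint C]
            _ = γ * ‖C‖ * ‖E s‖ := by ring
      _ = γ * ‖C‖ * ∫ s, ‖E s‖ ∂μ := integral_const_mul _ _
  -- Cauchy–Schwarz in L²
  have hCS : ∫ s, ‖E s‖ ∂μ ≤ Real.sqrt T * Real.sqrt (∫ s, ‖E s‖ ^ 2 ∂μ) := by
    have h2 : (ENNReal.ofReal 2) = 2 := by norm_num
    have hone : MemLp (fun _ : ℝ => (1:ℝ)) (ENNReal.ofReal 2) μ := by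
      rw [h2]; exact memLp_const 1
    have hEn : MemLp (fun s => ‖E s‖) (ENNReal.ofReal 2) μ := by
      rw [h2]; exact hE2.norm
    have hH := integral_mul_le_Lp_mul_Lq_of_nonneg (p := 2) (q := 2)
      ⟨by norm_num, by norm_num, by norm_num⟩ (ae_of_all _ fun s => zero_le_one)
      (ae_of_all _ fun s => norm_nonneg (E s)) hone hEn
    simp only [one_mul, Real.one_rpow] at hH
    have hr : ∀ x : ℝ, 0 ≤ x → x ^ (2:ℝ) = x ^ 2 := fun x hx => by
      rw [show (2:ℝ) = ((2:ℕ):ℝ) by norm_num, Real.rpow_natCast]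
    have hint1 : ∫ (_ : ℝ), (1:ℝ) ∂μ = T := by
      rw [integral_const, smul_eq_mul, mul_one, hμ, Measure.real, Measure.restrict_apply_univ,
        Real.volume_Ioc, ENNReal.toReal_ofReal (by linarith), sub_zero]
    rw [hint1] at hH
    have hEr : ∫ s, ‖E s‖ ^ (2:ℝ) ∂μ = ∫ s, ‖E s‖ ^ 2 ∂μ :=
      integral_congr_ae (ae_of_all _ fun s => hr _ (norm_nonneg _))
    rw [hEr] at hH
    calc ∫ s, ‖E s‖ ∂μ ≤ T ^ (1/2 : ℝ) * (∫ s, ‖E s‖ ^ 2 ∂μ) ^ (1/2 : ℝ) := hH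
      _ = Real.sqrt T * Real.sqrt (∫ s, ‖E s‖ ^ 2 ∂μ) := by
          rw [Real.sqrt_eq_rpow, Real.sqrt_eq_rpow]
  -- combine everything
  have hfinal : δ * ‖d‖ ^ 2
      ≤ ‖d‖ * (γ * ‖C‖ * (Real.sqrt T * Real.sqrt (∫ s, ‖E s‖ ^ 2 ∂μ))) := by
    calc δ * ‖d‖ ^ 2 ≤ ∫ s, ‖p s‖ ^ 2 ∂μ := hlow
      _ = ⟪d, ∫ s, exp (s • ContinuousLinearMap.adjoint A)
            (ContinuousLinearMap.adjoint C (E s)) ∂μ⟫ := hinner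
      _ ≤ ‖d‖ * ‖∫ s, exp (s • ContinuousLinearMap.adjoint A)
            (ContinuousLinearMap.adjoint C (E s)) ∂μ‖ := real_inner_le_norm _ _
      _ ≤ ‖d‖ * (γ * ‖C‖ * ∫ s, ‖E s‖ ∂μ) :=
          mul_le_mul_of_nonneg_left hWnorm (norm_nonneg d)
      _ ≤ ‖d‖ * (γ * ‖C‖ * (Real.sqrt T * Real.sqrt (∫ s, ‖E s‖ ^ 2 ∂μ))) := by
          refine mul_le_mul_of_nonneg_left ?_ (norm_nonneg d)
          exact mul_le_mul_of_nonneg_left hCS (mul_nonneg γ0 (norm_nonneg C))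
  have hIμ : ∫ s in (0:ℝ)..T, ‖E s‖ ^ 2 = ∫ s, ‖E s‖ ^ 2 ∂μ :=
    intervalIntegral.integral_of_le hT'
  rw [hIμ, div_mul_eq_mul_div, le_div_iff₀ hδ]
  have hR0 : 0 ≤ γ * ‖C‖ * Real.sqrt T * Real.sqrt (∫ s, ‖E s‖ ^ 2 ∂μ) :=
    mul_nonneg (mul_nonneg (mul_nonneg γ0 (norm_nonneg C)) (Real.sqrt_nonneg _))
      (Real.sqrt_nonneg _)
  by_cases hd0 : ‖d‖ = 0
  · rw [hd0, zero_mul]; exact hR0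
  · have hdpos : 0 < ‖d‖ := lt_of_le_of_ne (norm_nonneg d) (Ne.symm hd0)
    nlinarith [hfinal, hdpos]
end

section
/- Let ε ≥ 0 and λ > ε²/4 be real numbers, set ω := √(λ − ε²/4), let A be the 2×2 real matrix with rows (0, 1) and (−λ, −ε), and let D := diag(λ, 1). Then for every t ≥ 0, exp(tA) · D⁻¹ · exp(tAᵀ) · D = e^{−εt} I + ε e^{−εt} N(t), where N(t) is the 2×2 matrix with entries N(t)₁₁ = (1/ω) sin(ωt) cos(ωt) + (ε/2)/ω² · sin²(ωt), N(t)₁₂ = −(1/ω²) sin²(ωt), N(t)₂₁ = −(λ/ω²) sin²(ωt), N(t)₂₂ = −(1/ω) sin(ωt) cos(ωt) + (ε/2)/ω² · sin²(ωt). -/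
open Real Matrix

lemma my_exp_rot (X : Matrix (Fin 2) (Fin 2) ℝ) (ω t : ℝ) (hω : ω ≠ 0)
    (h : X * X = (-(ω ^ 2)) • 1) :
    NormedSpace.exp (t • X) =
      Real.cos (ω * t) • (1 : Matrix (Fin 2) (Fin 2) ℝ) + (Real.sin (ω * t) / ω) • X := by
  have hX2 : X ^ 2 = (-(ω ^ 2)) • 1 := by rw [sq]; exact h
  have heven : ∀ n : ℕ, (t • X) ^ (2 * n) = ((-1 : ℝ) ^ n * (ω * t) ^ (2 * n)) • 1 := by
    intro n
    rw [smul_pow, pow_mul X, hX2, smul_pow, one_pow, smul_smul]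
    congr 1
    rw [neg_pow, mul_pow, pow_mul, pow_mul]
    ring
  have hodd : ∀ n : ℕ, (t • X) ^ (2 * n + 1)
      = ((-1 : ℝ) ^ n * (ω * t) ^ (2 * n) * t) • X := by
    intro n
    rw [pow_succ, heven n, smul_mul_assoc, one_mul, smul_smul]
  rw [NormedSpace.exp_eq_tsum ℝ]
  refine HasSum.tsum_eq ?_
  refine HasSum.even_add_odd ?_ ?_
  · have := (Real.hasSum_cos (ω * t)).smul_const (1 : Matrix (Fin 2) (Fin 2) ℝ)
    convert this using 1
    · rfl
    funext n
    rw [heven n, smul_smul]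
    congr 1
    field_simp
  · have := ((Real.hasSum_sin (ω * t)).div_const ω).smul_const X
    convert this using 1
    · rfl
    funext n
    rw [hodd n, smul_smul]
    congr 1
    field_simp
    ring

lemma my_exp_smul_one (c : ℝ) :
    NormedSpace.exp (c • (1 : Matrix (Fin 2) (Fin 2) ℝ)) = Real.exp c • 1 := by
  rw [Matrix.smul_one_eq_diagonal, Matrix.exp_diagonal, Pi.exp_def, ← Matrix.smul_one_eq_diagonal]
  congr 1
  exact congrFun Real.exp_eq_exp_ℝ c |>.symm


set_option maxHeartbeats 2000000 in
/-- For one eigenmode of the damped wave equation, with `A = [[0, 1], [−λ, −ε]]`,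
`ω = √(λ − ε²/4)` and the energy weight `D = diag(λ, 1)`, the operator
`e^{At} e^{A*t}` (adjoint with respect to the energy inner product, represented by
`exp(tA) D⁻¹ exp(tAᵀ) D`) equals `e^{−εt} I + ε e^{−εt} N(t)` with the explicit
matrix `N(t)` below. -/
theorem damped_wave_mode_exp_mul_exp_adjoint
    (ε lam : ℝ) (hε : 0 ≤ ε) (hlam : ε ^ 2 / 4 < lam)
    (ω : ℝ) (hω : ω = Real.sqrt (lam - ε ^ 2 / 4))
    (A D : Matrix (Fin 2) (Fin 2) ℝ)
    (hA : A = !![0, 1; -lam, -ε]) (hD : D = !![lam, 0; 0, 1]) :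
    ∀ t : ℝ, 0 ≤ t →
      NormedSpace.exp (t • A) * D⁻¹ * NormedSpace.exp (t • Aᵀ) * D =
        Real.exp (-ε * t) • (1 : Matrix (Fin 2) (Fin 2) ℝ) +
          (ε * Real.exp (-ε * t)) •
            !![(1 / ω) * Real.sin (ω * t) * Real.cos (ω * t) +
                  (ε / 2) / ω ^ 2 * Real.sin (ω * t) ^ 2,
                -(1 / ω ^ 2) * Real.sin (ω * t) ^ 2;
              -(lam / ω ^ 2) * Real.sin (ω * t) ^ 2,
                -(1 / ω) * Real.sin (ω * t) * Real.cos (ω * t) +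
                  (ε / 2) / ω ^ 2 * Real.sin (ω * t) ^ 2] := by
  intro t ht
  have hsub : (0 : ℝ) < lam - ε ^ 2 / 4 := by linarith
  have hωpos : 0 < ω := hω ▸ Real.sqrt_pos.mpr hsub
  have hω2 : ω ^ 2 = lam - ε ^ 2 / 4 := by rw [hω, Real.sq_sqrt hsub.le]
  have hωne : ω ≠ 0 := hωpos.ne'
  have hlam0 : 0 < lam := lt_of_le_of_lt (by positivity) hlam
  set B : Matrix (Fin 2) (Fin 2) ℝ := !![ε / 2, 1; -lam, -(ε / 2)] with hB
  have hBB : B * B = (-(ω ^ 2)) • 1 := by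
    ext i j
    fin_cases i <;> fin_cases j <;>
      simp [hB, Matrix.mul_apply, Fin.sum_univ_two, Matrix.one_apply] <;>
      nlinarith [hω2]
  have hsplit : t • A = (-(ε / 2 * t)) • (1 : Matrix (Fin 2) (Fin 2) ℝ) + t • B := by
    ext i j
    fin_cases i <;> fin_cases j <;>
      simp [hA, hB, Matrix.one_apply] <;> ring
  have hcomm : Commute ((-(ε / 2 * t)) • (1 : Matrix (Fin 2) (Fin 2) ℝ)) (t • B) :=
    (Commute.one_left (t • B)).smul_left _
  have hexpA : NormedSpace.exp (t • A) =
      Real.exp (-(ε / 2 * t)) •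
        (Real.cos (ω * t) • (1 : Matrix (Fin 2) (Fin 2) ℝ) + (Real.sin (ω * t) / ω) • B) := by
    rw [hsplit, Matrix.exp_add_of_commute _ _ hcomm, my_exp_smul_one,
      my_exp_rot B ω t hωne hBB, smul_mul_assoc, one_mul]
  have hexpAT : NormedSpace.exp (t • Aᵀ) = (NormedSpace.exp (t • A))ᵀ := by
    rw [← Matrix.transpose_smul, Matrix.exp_transpose]
  have hDinv : D⁻¹ = !![1 / lam, 0; 0, 1] := by
    apply Matrix.inv_eq_right_inv
    ext i j
    fin_cases i <;> fin_cases j <;>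
      simp [hD, Matrix.mul_apply, Fin.sum_univ_two, Matrix.one_apply] <;>
      field_simp
  set s := Real.sin (ω * t) with hs
  set co := Real.cos (ω * t) with hco
  have hsc : s ^ 2 + co ^ 2 = 1 := Real.sin_sq_add_cos_sq (ω * t)
  have hM : NormedSpace.exp (t • A) =
      Real.exp (-(ε / 2 * t)) •
        !![co + (ε / 2) * (s / ω), s / ω; -lam * (s / ω), co - (ε / 2) * (s / ω)] := by
    rw [hexpA]
    congr 1
    ext i j
    fin_cases i <;> fin_cases j <;>
      simp [hB, Matrix.one_apply] <;> ring
  have hee : Real.exp (-(ε / 2 * t)) * Real.exp (-(ε / 2 * t)) = Real.exp (-ε * t) := by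
    rw [← Real.exp_add]; ring_nf
  have hMT : (!![co + ε / 2 * (s / ω), s / ω; -lam * (s / ω), co - ε / 2 * (s / ω)])ᵀ
      = !![co + ε / 2 * (s / ω), -lam * (s / ω); s / ω, co - ε / 2 * (s / ω)] := by
    ext i j
    fin_cases i <;> fin_cases j <;> simp
  rw [hexpAT, hM, hDinv, hD, Matrix.transpose_smul, hMT]
  simp only [Matrix.smul_mul, Matrix.mul_smul, smul_smul]
  rw [hee, Matrix.mul_fin_two, Matrix.mul_fin_two, Matrix.mul_fin_two]
  ext i j
  fin_cases i <;> fin_cases j <;>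
    simp only [Matrix.smul_apply, Matrix.add_apply, Matrix.one_apply, Matrix.cons_val',
      Matrix.cons_val_zero, Matrix.cons_val_one, Matrix.head_cons, Matrix.head_fin_const,
      Matrix.empty_val', Matrix.cons_val_fin_one, if_true, if_false, Fin.isValue,
      smul_eq_mul, Matrix.one_apply_eq] <;>
    norm_num <;> field_simp
  · linear_combination (4 * ω ^ 2) * hsc - (4 * s ^ 2) * hω2
  · ring
  · ring
  · linear_combination (4 * ω ^ 2) * hsc - (4 * s ^ 2) * hω2
end
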